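/- arXiv:2312.02952 — 6 statements merged into one kernel-verified Lean document; each statement's English description precedes it below -/
import Mathlib

section
/- Let g : [1,∞) → [0,1) be differentiable satisfying g(t) = 1 - e^{-g(t)·t} with g(1)=0 and g(t)>0 for t>1. Then for t>1, ∫₁^t g(τ)² dτ = -2g(t) - (2-g(t))·ln(1-g(t)). -/
open Real Set

theorem stmt_1 (g : ℝ → ℝ) (hdiff : ∀ t ≥ 1, DifferentiableAt ℝ g t)
    (hrange : ∀ t ≥ 1, 0 ≤ g t ∧ g t < 1)
    (himp : ∀ t ≥ 1, g t = 1 - Real.exp (-(g t) * t))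
    (h1 : g 1 = 0) (hpos : ∀ t > 1, g t > 0) :
    ∀ t > 1, ∫ τ in (1:ℝ)..t, (g τ) ^ 2 =
      -2 * g t - (2 - g t) * Real.log (1 - g t) := by
  intro t ht
  have hle : (1:ℝ) ≤ t := le_of_lt ht
  set F : ℝ → ℝ := fun y => -2 * g y - (2 - g y) * Real.log (1 - g y) with hF
  -- continuity of g on Icc
  have hgc : ContinuousOn g (Icc 1 t) := fun y hy =>
    (hdiff y hy.1).continuousAt.continuousWithinAt
  have hne : ∀ y ∈ Icc (1:ℝ) t, 1 - g y ≠ 0 := fun y hy =>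
    ne_of_gt (sub_pos.2 (hrange y hy.1).2)
  have hFc : ContinuousOn F (Icc 1 t) := by
    apply ContinuousOn.sub
    · exact continuousOn_const.mul hgc
    · exact (continuousOn_const.sub hgc).mul
        ((continuousOn_const.sub hgc).log hne)
  -- derivative on interior
  have hderiv : ∀ x ∈ Ioo (1:ℝ) t, HasDerivAt F ((fun τ => g τ ^ 2) x) x := by
    intro x hx
    have hx1 : (1:ℝ) < x := hx.1
    have hgx0 : 0 < g x := hpos x hx1
    have hgx1 : g x < 1 := (hrange x hx1.le).2
    have h1mg : 0 < 1 - g x := sub_pos.2 hgx1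
    have hex : Real.exp (-(g x) * x) = 1 - g x := by
      have := himp x hx1.le; linarith
    -- key positivity : 1 - (1 - g x) * x > 0
    have hD : 0 < 1 - (1 - g x) * x := by
      have hu : 0 < g x * x := mul_pos hgx0 (by linarith)
      have hE : g x * x + 1 < Real.exp (g x * x) :=
        Real.add_one_lt_exp (ne_of_gt hu)
      have hEe : Real.exp (g x * x) * Real.exp (-(g x) * x) = 1 := by
        rw [← Real.exp_add]; ring_nf; exact Real.exp_zero
      rw [hex] at hEe
      have hEpos : 0 < Real.exp (g x * x) := Real.exp_pos _
      nlinarith [hEe, hE, h1mg]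
    set d := deriv g x with hdd
    have hd : HasDerivAt g d x := (hdiff x hx1.le).hasDerivAt
    -- implicit differentiation
    have hd2 : HasDerivAt (fun y => 1 - Real.exp (-(g y) * y))
        (-(Real.exp (-(g x) * x) * (-d * x + -(g x) * 1))) x := by
      exact HasDerivAt.const_sub 1 ((hd.neg.mul (hasDerivAt_id x)).exp)
    have hev : (fun y => 1 - Real.exp (-(g y) * y)) =ᶠ[nhds x] g := by
      filter_upwards [Ioi_mem_nhds hx1] with y hy
      exact (himp y hy.le).symm
    have hd3 : HasDerivAt g (-(Real.exp (-(g x) * x) * (-d * x + -(g x) * 1))) x :=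
      hd2.congr_of_eventuallyEq hev.symm
    have hdeq : d = (1 - g x) * (d * x + g x) := by
      have := hd.unique hd3
      rw [hex] at this
      linarith [this]
    have hdD : d * (1 - (1 - g x) * x) = g x * (1 - g x) := by nlinarith [hdeq]
    -- derivative of F
    have hlog : HasDerivAt (fun y => Real.log (1 - g y)) (-d / (1 - g x)) x := by
      have := (HasDerivAt.const_sub 1 hd).log (ne_of_gt h1mg)
      simpa using this
    have hF' : HasDerivAt F
        (-2 * d - (-d * Real.log (1 - g x) + (2 - g x) * (-d / (1 - g x)))) x :=
      (hd.const_mul (-2)).sub ((HasDerivAt.const_sub 2 hd).mul hlog)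
    have hL : Real.log (1 - g x) = -(g x) * x := by
      rw [← hex, Real.log_exp]
    convert hF' using 1
    rw [hL]
    have hne' : (1 - g x) ≠ 0 := ne_of_gt h1mg
    field_simp
    nlinarith [hdD, h1mg]
  have hint : IntervalIntegrable (fun τ => g τ ^ 2) MeasureTheory.volume 1 t := by
    apply ContinuousOn.intervalIntegrable
    rw [uIcc_of_le hle]
    exact hgc.pow 2
  have := intervalIntegral.integral_eq_sub_of_hasDerivAt_of_le hle hFc hderiv hint
  rw [this]
  have hF1 : F 1 = 0 := by simp [hF, h1]
  rw [hF1, sub_zero]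
end

section
/- The function c_k(t) = k^{k-2}/k! · t^{k-1} · e^{-kt} (for k ≥ 1, t ≥ 0) satisfies the Smoluchowski equations dc_k/dt = (1/2)·Σ_{i+j=k} i·j·c_i·c_j − k·c_k with initial condition c_k(0) = δ_{k,1}. -/
open Real Finset Function

noncomputable def crgDensity (k : ℕ) (t : ℝ) : ℝ :=
  (k : ℝ) ^ (k - 2) / (Nat.factorial k) * t ^ (k - 1) * Real.exp (-(k : ℝ) * t)

lemma fwd_pow_zero : ∀ j : ℕ, ∀ n : ℕ, j < n → ∀ x : ℝ,
    (fwdDiff (1:ℝ))^[n] (fun s : ℝ => (x + s) ^ j) = fun _ => 0 := by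
  intro j
  induction j using Nat.strong_induction_on with
  | _ j IH =>
    intro n hjn x
    obtain ⟨m, rfl⟩ : ∃ m, n = m + 1 := ⟨n - 1, by omega⟩
    rw [iterate_succ_apply]
    have hstep : fwdDiff (1:ℝ) (fun s : ℝ => (x + s) ^ j)
        = ∑ i ∈ range j, (j.choose i : ℝ) • (fun s : ℝ => (x + s) ^ i) := by
      funext s
      simp only [fwdDiff, Finset.sum_apply, Pi.smul_apply, smul_eq_mul]
      have hb : (x + (s + 1)) ^ j = ∑ i ∈ range (j+1), (x+s)^i * 1^(j-i) * (j.choose i) := by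
        rw [← add_pow]; ring_nf
      rw [hb, Finset.sum_range_succ]
      simp only [one_pow, mul_one, Nat.choose_self, Nat.cast_one]
      rw [add_sub_cancel_right]
      exact Finset.sum_congr rfl fun i _ => mul_comm _ _
    rw [hstep, fwdDiff_iter_finset_sum]
    funext s
    simp only [Finset.sum_apply, Pi.zero_apply]
    apply Finset.sum_eq_zero
    intro i hi
    rw [fwdDiff_iter_const_smul (1:ℝ) ((j.choose i : ℝ)) (fun s : ℝ => (x + s) ^ i) m,
      IH i (mem_range.mp hi) m (by have := mem_range.mp hi; omega) x]
    simp

lemma altsum (n j : ℕ) (hjn : j < n) (x : ℝ) :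
    ∑ k ∈ range (n+1), (-1:ℝ)^(n-k) * (n.choose k) * (x + k)^j = 0 := by
  have h := fwdDiff_iter_eq_sum_shift (1:ℝ) (fun s : ℝ => (x+s)^j) n 0
  rw [fwd_pow_zero j n hjn x] at h
  simp only [Pi.zero_apply, zsmul_eq_mul, nsmul_eq_mul, mul_one, zero_add, Int.cast_mul,
    Int.cast_pow, Int.cast_neg, Int.cast_one, Int.cast_natCast] at h
  rw [← h]

noncomputable def phiF (k : ℕ) (x : ℝ) : ℝ := if k = 0 then 1 else x * (x + k)^(k-1)

noncomputable def AF (n : ℕ) (x y : ℝ) : ℝ :=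
  ∑ k ∈ range (n+1), (n.choose k : ℝ) * phiF k x * (y + ((n - k : ℕ) : ℝ))^(n - k)

lemma choose_mul_sub (n k : ℕ) (hk : k ≤ n) :
    ((n+1).choose k : ℝ) * ((n+1-k : ℕ) : ℝ) = ((n:ℝ)+1) * (n.choose k : ℝ) := by
  have h1 : (n+1).choose (k+1) * (k+1) = (n+1).choose k * (n+1-k) := Nat.choose_succ_right_eq (n+1) k
  have h2 : (n+1) * n.choose k = (n+1).choose (k+1) * (k+1) := Nat.add_one_mul_choose_eq n k
  have : (n+1).choose k * (n+1-k) = (n+1) * n.choose k := by omega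
  exact_mod_cast congrArg (Nat.cast : ℕ → ℝ) this

lemma sumD (n : ℕ) (x y : ℝ) :
    ∑ k ∈ range (n+2), ((n+1).choose k : ℝ) * phiF k x *
      (((n+1-k : ℕ) : ℝ) * (y + ((n+1-k : ℕ) : ℝ))^(n+1-k-1))
    = ((n:ℝ)+1) * AF n x (y+1) := by
  rw [Finset.sum_range_succ]
  simp only [Nat.sub_self, Nat.cast_zero, zero_mul, mul_zero, add_zero]
  rw [AF, Finset.mul_sum]
  apply Finset.sum_congr rfl
  intro k hk
  have hk' : k ≤ n := by simpa [Nat.lt_succ_iff] using hk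
  have h1 : n+1-k-1 = n-k := by omega
  have h2 : ((n+1-k : ℕ) : ℝ) = ((n-k : ℕ) : ℝ) + 1 := by
    have : n+1-k = (n-k)+1 := by omega
    rw [this]; push_cast; ring
  rw [h1]
  have := choose_mul_sub n k hk'
  calc ((n+1).choose k : ℝ) * phiF k x * (((n+1-k : ℕ) : ℝ) * (y + ((n+1-k : ℕ) : ℝ))^(n-k))
      = (((n+1).choose k : ℝ) * ((n+1-k : ℕ) : ℝ)) * phiF k x * (y + ((n+1-k : ℕ) : ℝ))^(n-k) := by ring
    _ = ((n:ℝ)+1) * ((n.choose k : ℝ) * phiF k x * (y + 1 + ((n-k : ℕ) : ℝ))^(n-k)) := by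
        rw [this, h2]; ring_nf

lemma hasDerivAt_AF (n : ℕ) (x y : ℝ) :
    HasDerivAt (fun y => AF (n+1) x y) (((n:ℝ)+1) * AF n x (y+1)) y := by
  rw [← sumD n x y]
  have : ∀ k ∈ range (n+2), HasDerivAt
      (fun y : ℝ => ((n+1).choose k : ℝ) * phiF k x * (y + ((n+1-k : ℕ) : ℝ))^(n+1-k))
      (((n+1).choose k : ℝ) * phiF k x *
        (((n+1-k : ℕ) : ℝ) * (y + ((n+1-k : ℕ) : ℝ))^(n+1-k-1))) y := by
    intro k _
    have h := (((hasDerivAt_id y).add_const (((n+1-k : ℕ) : ℝ))).fun_pow (n+1-k)).const_mul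
      (((n+1).choose k : ℝ) * phiF k x)
    simp only [id_eq] at h
    convert h using 1
    · rfl
    · rfl
    ring
  simpa [AF] using HasDerivAt.fun_sum this

lemma abelF : ∀ n : ℕ, ∀ x y : ℝ, AF n x y = (x + y + n)^n := by
  intro n
  induction n with
  | zero => intro x y; simp [AF, phiF]
  | succ n IH =>
    intro x
    set y₀ : ℝ := -x - (n+1) with hy₀
    have hF : ∀ y, HasDerivAt (fun y => AF (n+1) x y) (((n:ℝ)+1) * (x + y + ((n:ℝ)+1))^n) y := by
      intro y
      have h := hasDerivAt_AF n x y
      rw [IH x (y+1)] at h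
      convert h using 2
      push_cast; ring
    have hG : ∀ y, HasDerivAt (fun y : ℝ => (x + y + ((n:ℕ)+1:ℝ))^(n+1))
        (((n:ℝ)+1) * (x + y + ((n:ℝ)+1))^n) y := by
      intro y
      have h := (((hasDerivAt_id y).const_add x).add_const ((n:ℝ)+1)).fun_pow (n+1)
      simp only [id_eq] at h
      convert h using 1
      · rfl
      · rfl
      push_cast
      ring_nf
    set H : ℝ → ℝ := fun y => AF (n+1) x y - (x + y + ((n:ℝ)+1))^(n+1) with hH
    have hd : ∀ y, HasDerivAt H 0 y := by
      intro y
      simpa using (hF y).fun_sub (hG y)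
    have hconst : ∀ y z, H y = H z :=
      is_const_of_deriv_eq_zero (fun y => (hd y).differentiableAt) (fun y => (hd y).deriv)
    have hzero : H y₀ = 0 := by
      have e1 : AF (n+1) x y₀ = x * ∑ k ∈ range (n+2),
          (-1:ℝ)^(n+1-k) * ((n+1).choose k) * (x + k)^n := by
        rw [AF, Finset.mul_sum]
        apply Finset.sum_congr rfl
        intro k hk
        have hk' : k ≤ n+1 := by simpa [Nat.lt_succ_iff] using hk
        have hcast : ((n+1-k : ℕ) : ℝ) = ((n:ℝ)+1) - k := by
          push_cast [Nat.cast_sub hk']; ring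
        have hbase : y₀ + ((n+1-k : ℕ) : ℝ) = -(x + k) := by rw [hcast, hy₀]; ring
        rw [hbase, neg_pow]
        rcases Nat.eq_zero_or_pos k with rfl | hkpos
        · simp only [phiF, if_pos rfl, Nat.choose_zero_right, Nat.cast_zero, add_zero,
            Nat.sub_zero, Nat.cast_one]
          rw [pow_succ]
          norm_num
          ring
        · have hkne : k ≠ 0 := Nat.pos_iff_ne_zero.mp hkpos
          simp only [phiF, if_neg hkne]
          have : (x + (k:ℝ))^(k-1) * (x + (k:ℝ))^(n+1-k) = (x + (k:ℝ))^n := by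
            rw [← pow_add]
            congr 1
            omega
          calc ((n+1).choose k : ℝ) * (x * (x + k)^(k-1)) * ((-1)^(n+1-k) * (x+k)^(n+1-k))
              = x * ((-1)^(n+1-k) * ((n+1).choose k) * ((x + (k:ℝ))^(k-1) * (x + (k:ℝ))^(n+1-k))) := by ring
            _ = x * ((-1)^(n+1-k) * ((n+1).choose k) * (x + k)^n) := by rw [this]
      have e2 : (x + y₀ + ((n:ℝ)+1))^(n+1) = 0 := by
        rw [hy₀]; ring_nf
      rw [hH]
      simp only [e1, e2, sub_zero]
      rw [altsum (n+1) n (by omega) x]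
      ring
    intro y
    have := hconst y y₀
    rw [hzero] at this
    have : AF (n+1) x y = (x + y + ((n:ℝ)+1))^(n+1) := by
      have := sub_eq_zero.mp this
      exact this
    rw [this]
    push_cast; ring_nf

noncomputable def psiF (j : ℕ) (y : ℝ) : ℝ := if j = 0 then 1 else y * (y + j)^(j-1)

lemma psiF_eq (j : ℕ) (y : ℝ) : psiF j y = (y + j)^j - j * (y + j)^(j-1) := by
  rcases j with _ | j
  · simp [psiF]
  · simp only [psiF, Nat.succ_ne_zero, if_neg, Nat.succ_sub_one]
    rw [pow_succ]
    push_cast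
    ring

lemma keyB (m : ℕ) (x y : ℝ) :
    ∑ k ∈ range (m+2), ((m+1).choose k : ℝ) * phiF k x * psiF (m+1-k) y
    = (x+y) * (x+y+((m:ℝ)+1))^m := by
  have split : ∑ k ∈ range (m+2), ((m+1).choose k : ℝ) * phiF k x * psiF (m+1-k) y
      = AF (m+1) x y - ∑ k ∈ range (m+2), ((m+1).choose k : ℝ) * phiF k x *
        (((m+1-k : ℕ) : ℝ) * (y + ((m+1-k : ℕ) : ℝ))^(m+1-k-1)) := by
    rw [AF, ← Finset.sum_sub_distrib]
    apply Finset.sum_congr rfl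
    intro k _
    rw [psiF_eq]
    ring
  rw [split, sumD, abelF, abelF]
  have e1 : x + (y+1) + (m:ℝ) = x + y + (((m+1:ℕ)):ℝ) := by push_cast; ring
  have e2 : x + y + (((m+1:ℕ)):ℝ) = x + y + ((m:ℝ)+1) := by push_cast; ring
  rw [e1, e2, pow_succ]
  ring

lemma g_eq (m : ℕ) (x y : ℝ) :
    ∑ k ∈ Ioo 0 (m+1), ((m+1).choose k : ℝ) * (x*(x+(k:ℝ))^(k-1)) *
        (y*(y+((m+1-k:ℕ):ℝ))^(m+1-k-1))
    = (x+y)*(x+y+((m:ℝ)+1))^m - y*(y+((m:ℝ)+1))^m - x*(x+((m:ℝ)+1))^m := by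
  have hsum := keyB m x y
  rw [Finset.sum_range_succ, Finset.sum_range_succ'] at hsum
  have hlast : ((m+1).choose (m+1) : ℝ) * phiF (m+1) x * psiF (m+1-(m+1)) y
      = x*(x+((m:ℝ)+1))^m := by
    simp only [Nat.choose_self, Nat.cast_one, Nat.sub_self, psiF, if_pos rfl, mul_one, one_mul,
      phiF, Nat.succ_ne_zero, if_neg, Nat.succ_sub_one]
    push_cast; ring_nf
  have hzero : ((m+1).choose 0 : ℝ) * phiF 0 x * psiF (m+1-0) y
      = y*(y+((m:ℝ)+1))^m := by
    simp only [Nat.choose_zero_right, Nat.cast_one, Nat.sub_zero, phiF, if_pos rfl, mul_one,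
      one_mul, psiF, Nat.succ_ne_zero, if_neg, Nat.succ_sub_one]
    push_cast; ring_nf
  rw [hlast, hzero] at hsum
  have hmid : ∑ k ∈ Ioo 0 (m+1), ((m+1).choose k : ℝ) * (x*(x+(k:ℝ))^(k-1)) *
        (y*(y+((m+1-k:ℕ):ℝ))^(m+1-k-1))
      = ∑ i ∈ range m, ((m+1).choose (i+1) : ℝ) * phiF (i+1) x * psiF (m+1-(i+1)) y := by
    rw [show Ioo 0 (m+1) = Ico 1 (m+1) from (Finset.Ico_succ_left_eq_Ioo 0 (m+1)),
      Finset.sum_Ico_eq_sum_range]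
    simp only [Nat.add_sub_cancel]
    apply Finset.sum_congr rfl
    intro i hi
    have hi' : i < m := mem_range.mp hi
    have h1 : 1 + i = i + 1 := by ring
    rw [h1]
    simp only [phiF, psiF, Nat.succ_ne_zero, if_neg, Nat.add_sub_cancel]
    have hne : m+1-(i+1) ≠ 0 := by omega
    rw [if_neg hne]
    simp
  rw [hmid]
  linarith [hsum]

lemma step1 (m : ℕ) (y : ℝ) :
    ∑ k ∈ Ioo 0 (m+1), ((m+1).choose k : ℝ) * (k:ℝ)^(k-1) *
        (y*(y+((m+1-k:ℕ):ℝ))^(m+1-k-1))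
    = (y+((m:ℝ)+1))^m + (m:ℝ)*(y*(y+((m:ℝ)+1))^(m-1)) - ((m:ℝ)+1)^m := by
  have hF : HasDerivAt (fun x : ℝ => ∑ k ∈ Ioo 0 (m+1), ((m+1).choose k : ℝ) *
      (x*(x+(k:ℝ))^(k-1)) * (y*(y+((m+1-k:ℕ):ℝ))^(m+1-k-1)))
      (∑ k ∈ Ioo 0 (m+1), ((m+1).choose k : ℝ) * (k:ℝ)^(k-1) *
        (y*(y+((m+1-k:ℕ):ℝ))^(m+1-k-1))) 0 := by
    apply HasDerivAt.fun_sum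
    intro k _
    have h1 : HasDerivAt (fun x : ℝ => x*(x+(k:ℝ))^(k-1))
        (1 * ((0:ℝ)+(k:ℝ))^(k-1) + 0 * (((k-1:ℕ):ℝ) * ((0:ℝ)+(k:ℝ))^(k-1-1) * 1)) 0 :=
      (hasDerivAt_id 0).fun_mul (((hasDerivAt_id 0).add_const (k:ℝ)).fun_pow (k-1))
    have h2 := (h1.const_mul (((m+1).choose k : ℝ))).mul_const
      (y*(y+((m+1-k:ℕ):ℝ))^(m+1-k-1))
    convert h2 using 1
    · rfl
    simp
  have hG : HasDerivAt (fun x : ℝ => (x+y)*(x+y+((m:ℝ)+1))^m - y*(y+((m:ℝ)+1))^m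
      - x*(x+((m:ℝ)+1))^m)
      ((y+((m:ℝ)+1))^m + (m:ℝ)*(y*(y+((m:ℝ)+1))^(m-1)) - ((m:ℝ)+1)^m) 0 := by
    have ha : HasDerivAt (fun x : ℝ => (x+y)*(x+y+((m:ℝ)+1))^m)
        (1 * ((0:ℝ)+y+((m:ℝ)+1))^m + ((0:ℝ)+y) * ((m:ℝ) * ((0:ℝ)+y+((m:ℝ)+1))^(m-1) * 1)) 0 :=
      ((hasDerivAt_id 0).add_const y).fun_mul
        ((((hasDerivAt_id 0).add_const y).add_const ((m:ℝ)+1)).fun_pow m)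
    have hb : HasDerivAt (fun x : ℝ => x*(x+((m:ℝ)+1))^m)
        (1 * ((0:ℝ)+((m:ℝ)+1))^m + 0 * ((m:ℝ) * ((0:ℝ)+((m:ℝ)+1))^(m-1) * 1)) 0 :=
      (hasDerivAt_id 0).fun_mul (((hasDerivAt_id 0).add_const ((m:ℝ)+1)).fun_pow m)
    have := (ha.sub_const (y*(y+((m:ℝ)+1))^m)).fun_sub hb
    convert this using 1
    · rfl
    · rfl
    simp
    ring
  have heq : (fun x : ℝ => ∑ k ∈ Ioo 0 (m+1), ((m+1).choose k : ℝ) *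
      (x*(x+(k:ℝ))^(k-1)) * (y*(y+((m+1-k:ℕ):ℝ))^(m+1-k-1)))
      = (fun x : ℝ => (x+y)*(x+y+((m:ℝ)+1))^m - y*(y+((m:ℝ)+1))^m - x*(x+((m:ℝ)+1))^m) :=
    funext fun x => g_eq m x y
  rw [heq] at hF
  exact hF.unique hG

lemma keyId (m : ℕ) :
    ∑ k ∈ Ioo 0 (m+1), ((m+1).choose k : ℝ) * (k:ℝ)^(k-1) * ((m+1-k:ℕ):ℝ)^(m+1-k-1)
    = 2*(m:ℝ)*((m:ℝ)+1)^(m-1) := by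
  have hF : HasDerivAt (fun y : ℝ => ∑ k ∈ Ioo 0 (m+1), ((m+1).choose k : ℝ) * (k:ℝ)^(k-1) *
      (y*(y+((m+1-k:ℕ):ℝ))^(m+1-k-1)))
      (∑ k ∈ Ioo 0 (m+1), ((m+1).choose k : ℝ) * (k:ℝ)^(k-1) * ((m+1-k:ℕ):ℝ)^(m+1-k-1)) 0 := by
    apply HasDerivAt.fun_sum
    intro k _
    have h1 : HasDerivAt (fun y : ℝ => y*(y+((m+1-k:ℕ):ℝ))^(m+1-k-1))
        (1 * ((0:ℝ)+((m+1-k:ℕ):ℝ))^(m+1-k-1)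
          + 0 * (((m+1-k-1:ℕ):ℝ) * ((0:ℝ)+((m+1-k:ℕ):ℝ))^(m+1-k-1-1) * 1)) 0 :=
      (hasDerivAt_id 0).fun_mul (((hasDerivAt_id 0).add_const _).fun_pow (m+1-k-1))
    have h2 := h1.const_mul (((m+1).choose k : ℝ) * (k:ℝ)^(k-1))
    convert h2 using 1
    · rfl
    simp
  have hG : HasDerivAt (fun y : ℝ => (y+((m:ℝ)+1))^m + (m:ℝ)*(y*(y+((m:ℝ)+1))^(m-1))
      - ((m:ℝ)+1)^m)
      (2*(m:ℝ)*((m:ℝ)+1)^(m-1)) 0 := by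
    have ha : HasDerivAt (fun y : ℝ => (y+((m:ℝ)+1))^m)
        ((m:ℝ) * ((0:ℝ)+((m:ℝ)+1))^(m-1) * 1) 0 :=
      ((hasDerivAt_id 0).add_const ((m:ℝ)+1)).fun_pow m
    have hb : HasDerivAt (fun y : ℝ => y*(y+((m:ℝ)+1))^(m-1))
        (1 * ((0:ℝ)+((m:ℝ)+1))^(m-1)
          + 0 * (((m-1:ℕ):ℝ) * ((0:ℝ)+((m:ℝ)+1))^(m-1-1) * 1)) 0 :=
      (hasDerivAt_id 0).fun_mul (((hasDerivAt_id 0).add_const _).fun_pow (m-1))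
    have := (ha.fun_add (hb.const_mul (m:ℝ))).sub_const (((m:ℝ)+1)^m)
    convert this using 1
    · rfl
    · rfl
    simp
    ring
  have heq : (fun y : ℝ => ∑ k ∈ Ioo 0 (m+1), ((m+1).choose k : ℝ) * (k:ℝ)^(k-1) *
      (y*(y+((m+1-k:ℕ):ℝ))^(m+1-k-1)))
      = (fun y : ℝ => (y+((m:ℝ)+1))^m + (m:ℝ)*(y*(y+((m:ℝ)+1))^(m-1)) - ((m:ℝ)+1)^m) :=
    funext fun y => step1 m y
  rw [heq] at hF
  exact hF.unique hG

lemma pow_shift (i : ℕ) (hi : 0 < i) : (i:ℝ) * (i:ℝ)^(i-2) = (i:ℝ)^(i-1) := by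
  rcases Nat.lt_or_ge i 2 with h | h
  · interval_cases i <;> norm_num
  · rw [← pow_succ']
    congr 1
    omega

lemma term_eq (m : ℕ) (t : ℝ) (i : ℕ) (hi : i ∈ Ioo 0 (m+1)) :
    (i:ℝ) * ((m+1-i:ℕ):ℝ) * crgDensity i t * crgDensity (m+1-i) t
    = ((m+1).choose i : ℝ) * (i:ℝ)^(i-1) * ((m+1-i:ℕ):ℝ)^(m+1-i-1) *
      (t^(m-1) * Real.exp (-((m:ℝ)+1)*t) / (Nat.factorial (m+1))) := by
  obtain ⟨hi0, hi1⟩ := mem_Ioo.mp hi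
  have hj0 : 0 < m+1-i := by omega
  have epi := pow_shift i hi0
  have epj := pow_shift (m+1-i) hj0
  have et : t^(i-1) * t^(m+1-i-1) = t^(m-1) := by rw [← pow_add]; congr 1; omega
  have ee : Real.exp (-(i:ℝ)*t) * Real.exp (-((m+1-i:ℕ):ℝ)*t) = Real.exp (-((m:ℝ)+1)*t) := by
    rw [← Real.exp_add]
    congr 1
    have h : ((m+1-i:ℕ):ℝ) = (m:ℝ) + 1 - (i:ℝ) := by
      have : ((m+1-i:ℕ):ℝ) = ((m+1:ℕ):ℝ) - (i:ℝ) := by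
        rw [Nat.cast_sub (by omega)]
      rw [this]; push_cast; ring
    rw [h]; ring
  have ef : ((m+1)).factorial = ((m+1).choose i) * i.factorial * (m+1-i).factorial :=
    (Nat.choose_mul_factorial_mul_factorial (by omega : i ≤ m+1)).symm
  have hC : (((m+1).choose i : ℕ) : ℝ) ≠ 0 := by
    exact_mod_cast (Nat.choose_pos (by omega : i ≤ m+1)).ne'
  have hfi : ((i.factorial : ℕ) : ℝ) ≠ 0 := by exact_mod_cast i.factorial_pos.ne'
  have hfj : (((m+1-i).factorial : ℕ) : ℝ) ≠ 0 := by exact_mod_cast (m+1-i).factorial_pos.ne'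
  unfold crgDensity
  calc ((i:ℝ)) * ((m+1-i:ℕ):ℝ) *
        ((i : ℝ)^(i-2) / (i.factorial) * t^(i-1) * Real.exp (-(i:ℝ)*t)) *
        (((m+1-i:ℕ):ℝ)^(m+1-i-2) / ((m+1-i).factorial) * t^(m+1-i-1) *
          Real.exp (-((m+1-i:ℕ):ℝ)*t))
      = ((i:ℝ) * (i:ℝ)^(i-2)) * (((m+1-i:ℕ):ℝ) * ((m+1-i:ℕ):ℝ)^(m+1-i-2)) *
        (t^(i-1) * t^(m+1-i-1)) * (Real.exp (-(i:ℝ)*t) * Real.exp (-((m+1-i:ℕ):ℝ)*t)) /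
        ((i.factorial : ℝ) * ((m+1-i).factorial : ℝ)) := by ring
    _ = (i:ℝ)^(i-1) * ((m+1-i:ℕ):ℝ)^(m+1-i-1) * t^(m-1) * Real.exp (-((m:ℝ)+1)*t) /
        ((i.factorial : ℝ) * ((m+1-i).factorial : ℝ)) := by rw [epi, epj, et, ee]
    _ = ((m+1).choose i : ℝ) * (i:ℝ)^(i-1) * ((m+1-i:ℕ):ℝ)^(m+1-i-1) *
        (t^(m-1) * Real.exp (-((m:ℝ)+1)*t) / (Nat.factorial (m+1))) := by
        rw [ef]
        push_cast
        field_simp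

lemma sum_c (m : ℕ) (t : ℝ) :
    ∑ i ∈ Ioo 0 (m+1), (i:ℝ) * ((m+1-i:ℕ):ℝ) * crgDensity i t * crgDensity (m+1-i) t
    = 2*(m:ℝ)*((m:ℝ)+1)^(m-1) * (t^(m-1) * Real.exp (-((m:ℝ)+1)*t) / (Nat.factorial (m+1))) := by
  rw [Finset.sum_congr rfl (term_eq m t), ← Finset.sum_mul, keyId m]

theorem stmt_2 :
    (∀ k ≥ 1, ∀ t : ℝ,
      HasDerivAt (crgDensity k)
        ((1 / 2) * ∑ i ∈ Finset.Ioo 0 k,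
            (i : ℝ) * ((k - i : ℕ) : ℝ) * crgDensity i t * crgDensity (k - i) t
          - (k : ℝ) * crgDensity k t) t) ∧
    (∀ k ≥ 1, crgDensity k 0 = if k = 1 then 1 else 0) := by
  constructor
  · intro k hk t
    obtain ⟨m, rfl⟩ : ∃ m, k = m + 1 := ⟨k - 1, by omega⟩
    set A : ℝ := ((m+1:ℕ):ℝ)^(m+1-2) / (Nat.factorial (m+1)) with hA
    have hfun : crgDensity (m+1) = fun t : ℝ => A * t^(m+1-1) * Real.exp (-((m+1:ℕ):ℝ) * t) := rfl
    have hexp : HasDerivAt (fun t : ℝ => Real.exp (-((m+1:ℕ):ℝ) * t))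
        (Real.exp (-((m+1:ℕ):ℝ) * t) * (-((m+1:ℕ):ℝ) * 1)) t :=
      HasDerivAt.exp ((hasDerivAt_id t).const_mul (-((m+1:ℕ):ℝ)))
    have hder := ((hasDerivAt_pow (m+1-1) t).const_mul A).fun_mul hexp
    rw [hfun]
    convert hder using 1
    · rfl
    · rfl
    rw [sum_c m t]
    simp only [Nat.add_sub_cancel, show m+1-2 = m-1 from by omega, hA]
    push_cast
    ring
  · intro k hk
    obtain ⟨m, rfl⟩ : ∃ m, k = m + 1 := ⟨k - 1, by omega⟩
    rcases m with _ | m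
    · simp [crgDensity]
    · simp [crgDensity, Nat.succ_ne_zero]
end

section
/- For t in (0,1), the sum Σ_{k≥1} k·(k^{k-2}/k!)·t^{k-1}·e^{-kt} equals 1 (mass conservation in the subcritical phase). -/
open Real Finset

lemma fd : ∀ m n : ℕ, m < n →
    ∑ k ∈ Finset.range (n+1), (-1:ℝ)^k * (n.choose k) * (k:ℝ)^m = 0 := by
  intro m
  induction m using Nat.strong_induction_on with
  | _ m ih =>
    intro n hmn
    cases m with
    | zero =>
      simp only [pow_zero, mul_one]
      have := Int.alternating_sum_range_choose_of_ne (n := n) (by omega)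
      have h2 : ((∑ i ∈ range (n + 1), (-1:ℤ) ^ i * ↑(n.choose i) : ℤ) : ℝ) = 0 := by
        rw [this]; norm_num
      push_cast at h2
      convert h2 using 2
    | succ m' =>
      obtain ⟨n', rfl⟩ : ∃ n', n = n' + 1 := ⟨n - 1, by omega⟩
      have hm'n' : m' < n' := by omega
      rw [Finset.sum_range_succ'] -- splits off k = 0
      have h0 : (-1:ℝ)^0 * (((n'+1).choose 0 : ℕ) : ℝ) * ((0:ℕ):ℝ)^(m'+1) = 0 := by
        simp
      rw [h0, add_zero]
      have key : ∀ k ∈ Finset.range (n'+1),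
          (-1:ℝ)^(k+1) * (((n'+1).choose (k+1) : ℕ) : ℝ) * ((k+1 : ℕ):ℝ)^(m'+1)
          = -((n'+1):ℝ) * ((-1:ℝ)^k * (n'.choose k : ℝ) * ((k:ℝ)+1)^(m')) := by
        intro k _
        have hc : (n'+1) * (n'.choose k) = (n'+1).choose (k+1) * (k+1) :=
          Nat.add_one_mul_choose_eq n' k
        have hc' : (((n'+1).choose (k+1) : ℕ) : ℝ) * ((k:ℝ)+1)
            = ((n'+1):ℝ) * (n'.choose k : ℝ) := by
          have := congrArg (fun x : ℕ => (x : ℝ)) hc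
          push_cast at this ⊢
          linarith
        have : ((k+1:ℕ):ℝ)^(m'+1) = ((k:ℝ)+1) * ((k:ℝ)+1)^m' := by
          push_cast; ring
        rw [this, pow_succ]
        linear_combination (-(-1:ℝ)^k * ((k:ℝ)+1)^m') * hc'
      rw [Finset.sum_congr rfl key, ← Finset.mul_sum]
      have inner : ∑ k ∈ Finset.range (n'+1), (-1:ℝ)^k * (n'.choose k : ℝ) * ((k:ℝ)+1)^(m') = 0 := by
        have expand : ∀ k ∈ Finset.range (n'+1), (-1:ℝ)^k * (n'.choose k : ℝ) * ((k:ℝ)+1)^(m')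
            = ∑ i ∈ Finset.range (m'+1), (m'.choose i : ℝ) * ((-1:ℝ)^k * (n'.choose k : ℝ) * (k:ℝ)^i) := by
          intro k _
          rw [add_pow]
          rw [Finset.mul_sum]
          apply Finset.sum_congr rfl
          intro i _
          simp [mul_comm, mul_assoc, mul_left_comm]
        rw [Finset.sum_congr rfl expand, Finset.sum_comm]
        apply Finset.sum_eq_zero
        intro i hi
        rw [← Finset.mul_sum, ih i (by simp at hi; omega) n' (by simp at hi; omega), mul_zero]
      rw [inner, mul_zero]

lemma abelId : ∀ n : ℕ, 1 ≤ n → ∀ y : ℝ,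
    ∑ k ∈ Finset.Icc 1 n, (n.choose k : ℝ) * (k:ℝ)^(k-1) * (y + n - k)^(n-k)
      = n * (y + n)^(n-1) := by
  intro n hn
  induction n, hn using Nat.le_induction with
  | base =>
    intro y
    norm_num
  | succ n hn ih =>
    intro y
    set F : ℝ → ℝ := fun y =>
      (∑ k ∈ Finset.Icc 1 (n+1), ((n+1).choose k : ℝ) * (k:ℝ)^(k-1) * (y + (n+1:ℕ) - k)^((n+1)-k))
        - ((n+1:ℕ) : ℝ) * (y + (n+1:ℕ))^n with hF
    have hderiv : ∀ z : ℝ, HasDerivAt F 0 z := by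
      intro z
      have hterm : ∀ k ∈ Finset.Icc 1 (n+1),
          HasDerivAt (fun y : ℝ => ((n+1).choose k : ℝ) * (k:ℝ)^(k-1) * (y + (n+1:ℕ) - k)^((n+1)-k))
            (((n+1).choose k : ℝ) * (k:ℝ)^(k-1) * (((n+1)-k : ℕ) * (z + (n+1:ℕ) - k)^((n+1)-k-1))) z := by
        intro k hk
        have h1 : HasDerivAt (fun y : ℝ => y + (n+1:ℕ) - (k:ℝ)) 1 z := by
          simpa using ((hasDerivAt_id z).add_const ((n+1:ℕ):ℝ)).sub_const (k:ℝ)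
        have h2 := h1.pow ((n+1)-k)
        simp only [mul_one] at h2
        exact h2.const_mul _
      have hsum := HasDerivAt.fun_sum hterm
      have hrhs : HasDerivAt (fun y : ℝ => ((n+1:ℕ):ℝ) * (y + (n+1:ℕ))^n)
          (((n+1:ℕ):ℝ) * ((n:ℝ) * (z + (n+1:ℕ))^(n-1))) z := by
        have h1 : HasDerivAt (fun y : ℝ => y + ((n+1:ℕ):ℝ)) 1 z := (hasDerivAt_id z).add_const _
        have h2 := h1.pow n
        simp only [mul_one] at h2
        exact h2.const_mul _
      have hD := hsum.sub hrhs
      -- show the derivative value is 0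
      have hval : (∑ k ∈ Finset.Icc 1 (n+1),
          ((n+1).choose k : ℝ) * (k:ℝ)^(k-1) * (((n+1)-k : ℕ) * (z + (n+1:ℕ) - k)^((n+1)-k-1)))
          - ((n+1:ℕ):ℝ) * ((n:ℝ) * (z + (n+1:ℕ))^(n-1)) = 0 := by
        have hsplit : ∑ k ∈ Finset.Icc 1 (n+1),
            ((n+1).choose k : ℝ) * (k:ℝ)^(k-1) * (((n+1)-k : ℕ) * (z + (n+1:ℕ) - k)^((n+1)-k-1))
            = ∑ k ∈ Finset.Icc 1 n,
            ((n+1).choose k : ℝ) * (k:ℝ)^(k-1) * (((n+1)-k : ℕ) * (z + (n+1:ℕ) - k)^((n+1)-k-1)) := by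
          rw [Finset.sum_Icc_succ_top (by omega : 1 ≤ n+1)]
          simp
        rw [hsplit]
        have hterm2 : ∀ k ∈ Finset.Icc 1 n,
            ((n+1).choose k : ℝ) * (k:ℝ)^(k-1) * (((n+1)-k : ℕ) * (z + (n+1:ℕ) - k)^((n+1)-k-1))
            = ((n+1:ℕ):ℝ) * ((n.choose k : ℝ) * (k:ℝ)^(k-1) * ((z+1) + (n:ℕ) - k)^(n-k)) := by
          intro k hk
          simp only [Finset.mem_Icc] at hk
          have hcoef : ((n+1).choose k : ℕ) * ((n+1) - k) = (n+1) * n.choose k := by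
            rw [Nat.add_one_mul_choose_eq]
            exact (Nat.choose_succ_right_eq (n+1) k).symm
          have hexp : (n+1) - k - 1 = n - k := by omega
          have hbase : z + ((n+1:ℕ):ℝ) - k = (z+1) + (n:ℕ) - k := by push_cast; ring
          rw [hexp, hbase]
          have hcoefR : ((n+1).choose k : ℝ) * (((n+1) - k : ℕ) : ℝ) = ((n+1:ℕ):ℝ) * (n.choose k : ℝ) := by
            have := congrArg (fun x : ℕ => (x:ℝ)) hcoef
            push_cast at this
            push_cast
            linarith
          calc ((n+1).choose k : ℝ) * (k:ℝ)^(k-1) * ((((n+1)-k : ℕ):ℝ) * ((z+1) + (n:ℕ) - k)^(n-k))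
              = (((n+1).choose k : ℝ) * (((n+1) - k : ℕ) : ℝ)) * ((k:ℝ)^(k-1) * ((z+1) + (n:ℕ) - k)^(n-k)) := by ring
            _ = (((n+1:ℕ):ℝ) * (n.choose k : ℝ)) * ((k:ℝ)^(k-1) * ((z+1) + (n:ℕ) - k)^(n-k)) := by rw [hcoefR]
            _ = ((n+1:ℕ):ℝ) * ((n.choose k : ℝ) * (k:ℝ)^(k-1) * ((z+1) + (n:ℕ) - k)^(n-k)) := by ring
        rw [Finset.sum_congr rfl hterm2, ← Finset.mul_sum, ih (z+1)]
        have : (z+1) + ((n:ℕ):ℝ) = z + ((n+1:ℕ):ℝ) := by push_cast; ring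
        rw [this]
        ring
      rw [← hval]
      exact hD
    -- F is constant, equal to its value at y₀ = -(n+1)
    have hconst : F y = F (-(((n+1):ℕ):ℝ)) := by
      apply is_const_of_deriv_eq_zero
      · intro z; exact (hderiv z).differentiableAt
      · intro z; exact (hderiv z).deriv
    have hzero : F (-(((n+1):ℕ):ℝ)) = 0 := by
      rw [hF]
      simp only
      have hterm3 : ∀ k ∈ Finset.Icc 1 (n+1),
          ((n+1).choose k : ℝ) * (k:ℝ)^(k-1) * ((-(((n+1):ℕ):ℝ) + (n+1:ℕ) - k)^((n+1)-k))
          = (-1:ℝ)^(n+1) * ((-1:ℝ)^k * ((n+1).choose k : ℝ) * (k:ℝ)^n) := by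
        intro k hk
        simp only [Finset.mem_Icc] at hk
        have hb : -(((n+1):ℕ):ℝ) + ((n+1:ℕ):ℝ) - (k:ℝ) = -(k:ℝ) := by ring
        rw [hb]
        have : (-(k:ℝ))^((n+1)-k) = (-1:ℝ)^((n+1)-k) * (k:ℝ)^((n+1)-k) := by
          rw [neg_pow]
        rw [this]
        have hpowk : (k:ℝ)^(k-1) * (k:ℝ)^((n+1)-k) = (k:ℝ)^n := by
          rw [← pow_add]
          congr 1
          omega
        have hsign : (-1:ℝ)^((n+1)-k) = (-1:ℝ)^(n+1) * (-1:ℝ)^k := by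
          rw [← pow_add, show n+1+k = ((n+1)-k) + 2*k by omega, pow_add, pow_mul]
          norm_num
        calc ((n+1).choose k : ℝ) * (k:ℝ)^(k-1) * ((-1:ℝ)^((n+1)-k) * (k:ℝ)^((n+1)-k))
            = (-1:ℝ)^((n+1)-k) * ((n+1).choose k : ℝ) * ((k:ℝ)^(k-1) * (k:ℝ)^((n+1)-k)) := by ring
          _ = (-1:ℝ)^((n+1)-k) * ((n+1).choose k : ℝ) * (k:ℝ)^n := by rw [hpowk]
          _ = (-1:ℝ)^(n+1) * ((-1:ℝ)^k * ((n+1).choose k : ℝ) * (k:ℝ)^n) := by rw [hsign]; ring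
      rw [Finset.sum_congr rfl hterm3, ← Finset.mul_sum]
      have hext : ∑ k ∈ Finset.Icc 1 (n+1), ((-1:ℝ)^k * ((n+1).choose k : ℝ) * (k:ℝ)^n)
          = ∑ k ∈ Finset.range (n+2), ((-1:ℝ)^k * ((n+1).choose k : ℝ) * (k:ℝ)^n) := by
        rw [Finset.range_eq_Ico]
        rw [show Finset.Icc 1 (n+1) = Finset.Ico 1 (n+2) by rfl]
        rw [Finset.sum_eq_sum_Ico_succ_bot (by omega : 0 < n+2)]
        have : (0:ℝ)^n = 0 := by
          apply zero_pow; omega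
        simp [this]
      rw [hext, fd n (n+1) (by omega), mul_zero]
      have : (-(((n+1):ℕ):ℝ) + ((n+1:ℕ):ℝ)) = 0 := by ring
      rw [this]
      have : (0:ℝ)^n = 0 := by apply zero_pow; omega
      rw [this]
      ring
    have : F y = 0 := hconst.trans hzero
    rw [hF] at this
    simp only [Nat.add_sub_cancel] at this ⊢
    linarith [this]

noncomputable def cc : ℕ → ℝ := fun k => if k = 0 then 0 else (k:ℝ)^(k-1) / (Nat.factorial k)

lemma cc_nonneg (k : ℕ) : 0 ≤ cc k := by
  unfold cc
  split
  · exact le_refl 0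
  · positivity

lemma cc_mul_le (k : ℕ) : cc k * k ≤ Real.exp 1 ^ k := by
  unfold cc
  rcases Nat.eq_zero_or_pos k with hk | hk
  · subst hk; simp
  · rw [if_neg hk.ne']
    have h1 : (k:ℝ)^(k-1)/(Nat.factorial k) * k = (k:ℝ)^k / (Nat.factorial k) := by
      rw [div_mul_eq_mul_div]
      congr 1
      rw [← pow_succ]
      congr 1
      omega
    rw [h1]
    have h2 := Real.pow_div_factorial_le_exp (x := (k:ℝ)) (Nat.cast_nonneg k) k
    calc (k:ℝ)^k / (Nat.factorial k) ≤ Real.exp k := h2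
      _ = Real.exp 1 ^ k := by
          rw [← Real.exp_nat_mul]
          norm_num
  
lemma cc_le (k : ℕ) : cc k ≤ Real.exp 1 ^ k := by
  rcases Nat.eq_zero_or_pos k with hk | hk
  · subst hk; simp [cc]
  · calc cc k = cc k * 1 := by ring
      _ ≤ cc k * k := by
          apply mul_le_mul_of_nonneg_left _ (cc_nonneg k)
          exact_mod_cast hk
      _ ≤ Real.exp 1 ^ k := cc_mul_le k

lemma cc_zero : cc 0 = 0 := by simp [cc]

lemma cc_one : cc 1 = 1 := by simp [cc]

lemma cc_def (k : ℕ) (hk : k ≠ 0) : cc k = (k:ℝ)^(k-1) / (Nat.factorial k) := by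
  rw [cc, if_neg hk]

noncomputable def SS : ℝ → ℝ := fun x => ∑' k, cc k * x^k

lemma e_abs_lt {x : ℝ} (hx : |x| < (Real.exp 1)⁻¹) : Real.exp 1 * |x| < 1 := by
  have := mul_lt_mul_of_pos_left hx (Real.exp_pos 1)
  rwa [mul_inv_cancel₀ (Real.exp_pos 1).ne'] at this

lemma geom_summable {x : ℝ} (hx : |x| < (Real.exp 1)⁻¹) :
    Summable (fun k : ℕ => (Real.exp 1 * |x|)^k) :=
  summable_geometric_of_lt_one (by positivity) (e_abs_lt hx)

lemma bound_gen {c : ℝ} (hc0 : 0 ≤ c) {k : ℕ} (hc : c ≤ Real.exp 1 ^ k) (x : ℝ) :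
    ‖c * x^k‖ ≤ (Real.exp 1 * |x|)^k := by
  rw [norm_mul, norm_pow, Real.norm_eq_abs, Real.norm_eq_abs, abs_of_nonneg hc0, mul_pow]
  exact mul_le_mul_of_nonneg_right hc (pow_nonneg (abs_nonneg x) k)

lemma summable_S {x : ℝ} (hx : |x| < (Real.exp 1)⁻¹) : Summable (fun k => cc k * x^k) :=
  Summable.of_norm_bounded (geom_summable hx) (fun k => bound_gen (cc_nonneg k) (cc_le k) x)

lemma summable_Q {x : ℝ} (hx : |x| < (Real.exp 1)⁻¹) : Summable (fun k => (cc k * k) * x^k) :=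
  Summable.of_norm_bounded (geom_summable hx)
    (fun k => bound_gen (mul_nonneg (cc_nonneg k) (Nat.cast_nonneg k)) (cc_mul_le k) x)

lemma summable_absS {x : ℝ} (hx : |x| < (Real.exp 1)⁻¹) :
    Summable (fun k => ‖cc k * x^k‖) :=
  Summable.of_nonneg_of_le (fun k => norm_nonneg _)
    (fun k => bound_gen (cc_nonneg k) (cc_le k) x) (geom_summable hx)

lemma summable_absQ {x : ℝ} (hx : |x| < (Real.exp 1)⁻¹) :
    Summable (fun k => ‖(cc k * k) * x^k‖) :=
  Summable.of_nonneg_of_le (fun k => norm_nonneg _)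
    (fun k => bound_gen (mul_nonneg (cc_nonneg k) (Nat.cast_nonneg k)) (cc_mul_le k) x) (geom_summable hx)

lemma summable_R {x : ℝ} (hx : |x| < (Real.exp 1)⁻¹) :
    Summable (fun k => cc (k+1) * x^k) := by
  apply Summable.of_norm_bounded (g := fun k : ℕ => Real.exp 1 * (Real.exp 1 * |x|)^k)
    ((geom_summable hx).mul_left _)
  intro k
  have h := bound_gen (cc_nonneg (k+1)) (cc_le (k+1)) x (k := k+1)
  rw [norm_mul, norm_pow, Real.norm_eq_abs, Real.norm_eq_abs, abs_of_nonneg (cc_nonneg _)]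
  calc cc (k+1) * |x|^k ≤ Real.exp 1 ^ (k+1) * |x|^k :=
        mul_le_mul_of_nonneg_right (cc_le (k+1)) (pow_nonneg (abs_nonneg x) k)
    _ ≤ Real.exp 1 * (Real.exp 1 * |x|)^k := by
        rw [pow_succ, mul_pow]
        calc Real.exp 1 ^ k * Real.exp 1 * |x| ^ k
            = Real.exp 1 * (Real.exp 1 ^k * |x|^k) := by ring
          _ ≤ Real.exp 1 * (Real.exp 1 ^k * |x|^k) := le_refl _

noncomputable def PP : ℝ → ℝ := fun x => ∑' k, cc k * ((k:ℝ) * x^(k-1))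

lemma hasDerivAt_S {x : ℝ} (hx : |x| < (Real.exp 1)⁻¹) : HasDerivAt SS (PP x) x := by
  set r : ℝ := (|x| + (Real.exp 1)⁻¹)/2 with hr
  have hxr : |x| < r := by
    rw [hr]; linarith
  have hre : r < (Real.exp 1)⁻¹ := by rw [hr]; linarith [abs_nonneg x]
  have hr0 : 0 < r := lt_of_le_of_lt (abs_nonneg x) hxr
  have key : HasDerivAt (fun z => ∑' k, cc k * z^k) (∑' k, cc k * ((k:ℝ) * x^(k-1))) x := by
    apply hasDerivAt_tsum_of_isPreconnected
      (u := fun k : ℕ => Real.exp 1 * ((k:ℝ) * (Real.exp 1 * r)^(k-1)))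
      (t := Set.Ioo (-r) r) (y₀ := x) (g := fun n z => cc n * z^n)
      (g' := fun n y => cc n * ((n:ℝ) * y^(n-1)))
    · -- Summable u
      apply Summable.mul_left
      have hlt : Real.exp 1 * r < 1 := by
        have := mul_lt_mul_of_pos_left hre (Real.exp_pos 1)
        rwa [mul_inv_cancel₀ (Real.exp_pos 1).ne'] at this
      have h1 : Summable (fun k : ℕ => ((k:ℕ):ℝ)^1 * (Real.exp 1 * r)^k) := by
        apply summable_pow_mul_geometric_of_norm_lt_one
        rw [Real.norm_eq_abs, abs_of_nonneg (by positivity)]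
        exact hlt
      have hg : Summable (fun k : ℕ => (Real.exp 1 * r)^k) :=
        summable_geometric_of_lt_one (by positivity) hlt
      have h2 : Summable (fun k : ℕ => (((k+1):ℕ):ℝ)^1 * (Real.exp 1 * r)^k) := by
        apply (h1.add hg).congr
        intro k
        push_cast
        ring
      apply (summable_nat_add_iff 1).mp
      apply Summable.of_nonneg_of_le _ _ h2
      · intro k; positivity
      · intro k
        simp only [pow_one, Nat.add_sub_cancel]
        push_cast
        apply mul_le_mul_of_nonneg_right _ (by positivity)
        linarith
    · exact isOpen_Ioo
    · exact (convex_Ioo _ _).isPreconnected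
    · intro n y _
      exact (hasDerivAt_pow n y).const_mul (cc n)
    · intro n y hy
      rw [norm_mul, norm_mul, Real.norm_eq_abs, Real.norm_eq_abs, Real.norm_eq_abs,
        abs_of_nonneg (cc_nonneg n), abs_of_nonneg (by positivity : (0:ℝ) ≤ (n:ℝ)),
        abs_pow]
      have hyr : |y| ≤ r := by
        rcases hy with ⟨h1, h2⟩
        rw [abs_le]; constructor <;> linarith
      calc cc n * ((n:ℝ) * |y|^(n-1)) ≤ Real.exp 1 ^ n * ((n:ℝ) * r^(n-1)) := by
            apply mul_le_mul (cc_le n)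
            · apply mul_le_mul_of_nonneg_left _ (by positivity)
              exact pow_le_pow_left₀ (abs_nonneg y) hyr _
            · positivity
            · positivity
        _ ≤ Real.exp 1 * ((n:ℝ) * (Real.exp 1 * r)^(n-1)) := by
            rcases Nat.eq_zero_or_pos n with h | h
            · subst h; simp
            · have : Real.exp 1 ^ n = Real.exp 1 * Real.exp 1 ^ (n-1) := by
                rw [← pow_succ']
                congr 1
                omega
              rw [this, mul_pow]
              apply le_of_eq
              ring
    · exact Set.mem_Ioo.mpr ⟨by linarith [neg_abs_le x, abs_nonneg x], lt_of_abs_lt hxr⟩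
    · exact summable_S hx
    · exact Set.mem_Ioo.mpr ⟨by linarith [neg_abs_le x], lt_of_abs_lt hxr⟩
  exact key


lemma coeffId (n : ℕ) : ∑ p ∈ Finset.HasAntidiagonal.antidiagonal n, cc p.1 * (cc p.2 * p.2)
    = cc n * n - cc n := by
  rcases Nat.eq_zero_or_pos n with hn | hn
  · subst hn
    simp [cc]
  rw [Finset.Nat.sum_antidiagonal_eq_sum_range_succ_mk]
  have habel := abelId n hn 0
  simp only [zero_add] at habel
  -- restrict to i ∈ Icc 1 n
  have hsub : Finset.Icc 1 n ⊆ Finset.range (n+1) := by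
    intro i hi
    simp only [Finset.mem_Icc] at hi
    simp only [Finset.mem_range]
    omega
  rw [← Finset.sum_subset hsub (by
    intro i hi hni
    simp only [Finset.mem_range] at hi
    simp only [Finset.mem_Icc] at hni
    have : i = 0 := by omega
    subst this
    simp [cc])]
  -- termwise rewrite
  have hterm : ∀ i ∈ Finset.Icc 1 n, cc i * (cc (n - i) * ((n - i : ℕ):ℝ))
      = (n.choose i : ℝ) * (i:ℝ)^(i-1) * ((n:ℝ) - i)^(n-i) / (Nat.factorial n)
        - (if i = n then ((n:ℝ))^(n-1) / (Nat.factorial n) else 0) := by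
    intro i hi
    simp only [Finset.mem_Icc] at hi
    by_cases hin : i = n
    · subst hin
      simp only [if_pos rfl, Nat.sub_self]
      have h0 : cc 0 * ((0:ℕ):ℝ) = 0 := by simp [cc]
      rw [h0, mul_zero, Nat.choose_self]
      simp
    · have hi1 : 1 ≤ i := hi.1
      have hin' : i < n := lt_of_le_of_ne hi.2 hin
      have hj1 : 1 ≤ n - i := by omega
      rw [if_neg hin]
      have hcci : cc i = (i:ℝ)^(i-1) / (Nat.factorial i) := by
        rw [cc, if_neg (by omega)]
      have hccj : cc (n-i) * ((n-i:ℕ):ℝ) = ((n-i:ℕ):ℝ)^(n-i) / (Nat.factorial (n-i)) := by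
        rw [cc, if_neg (by omega), div_mul_eq_mul_div, ← pow_succ]
        congr 2
        omega
      rw [hcci, hccj]
      have hcast : ((n:ℝ) - i) = ((n - i : ℕ):ℝ) := (Nat.cast_sub hi.2).symm
      rw [hcast]
      have hfact : (n.choose i : ℝ) * (Nat.factorial i) * (Nat.factorial (n-i)) = (Nat.factorial n) := by
        exact_mod_cast congrArg (fun m : ℕ => (m:ℝ)) (Nat.choose_mul_factorial_mul_factorial hi.2)
      have hfi : (Nat.factorial i : ℝ) ≠ 0 := by positivity
      have hfj : (Nat.factorial (n-i) : ℝ) ≠ 0 := by positivity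
      have hfn : (Nat.factorial n : ℝ) ≠ 0 := by positivity
      rw [sub_zero, div_mul_div_comm, div_eq_div_iff (by positivity) hfn]
      linear_combination (-(i:ℝ)^(i-1) * ((n-i:ℕ):ℝ)^(n-i)) * hfact
  rw [Finset.sum_congr rfl hterm, Finset.sum_sub_distrib]
  rw [Finset.sum_ite_eq' (Finset.Icc 1 n) n (fun _ => ((n:ℝ))^(n-1) / (Nat.factorial n))]
  rw [if_pos (by simp [Finset.mem_Icc]; omega)]
  have hdivsum : ∑ i ∈ Finset.Icc 1 n, (n.choose i : ℝ) * (i:ℝ)^(i-1) * ((n:ℝ) - i)^(n-i) / (Nat.factorial n)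
      = (n:ℝ) * (n:ℝ)^(n-1) / (Nat.factorial n) := by
    rw [← Finset.sum_div, habel]
  rw [hdivsum]
  have hccn : cc n = (n:ℝ)^(n-1)/(Nat.factorial n) := by rw [cc, if_neg (by omega)]
  rw [hccn]
  ring

-- the ODE : x * PP x * (1 - SS x) = SS x
lemma ode {x : ℝ} (hx : |x| < (Real.exp 1)⁻¹) : x * PP x - SS x * (x * PP x) = SS x := by
  have hQP : x * PP x = ∑' k, (cc k * k) * x^k := by
    rw [PP, ← tsum_mul_left]
    apply tsum_congr
    intro k
    rcases Nat.eq_zero_or_pos k with h | h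
    · subst h; simp
    · have : x^(k-1) * x = x^k := by
        rw [← pow_succ]
        congr 1
        omega
      calc x * (cc k * ((k:ℝ) * x^(k-1))) = (cc k * k) * (x^(k-1) * x) := by ring
        _ = (cc k * k) * x^k := by rw [this]
  rw [hQP]
  have hcauchy := tsum_mul_tsum_eq_tsum_sum_antidiagonal_of_summable_norm
    (f := fun k => cc k * x^k) (g := fun k => (cc k * k) * x^k)
    (summable_absS hx) (summable_absQ hx)
  have hterm : ∀ n : ℕ, ∑ p ∈ Finset.HasAntidiagonal.antidiagonal n, (cc p.1 * x^p.1) * ((cc p.2 * p.2) * x^p.2)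
      = ((cc n * n) * x^n) - (cc n * x^n) := by
    intro n
    have h1 : ∀ p ∈ Finset.HasAntidiagonal.antidiagonal n, (cc p.1 * x^p.1) * ((cc p.2 * p.2) * x^p.2)
        = (cc p.1 * (cc p.2 * p.2)) * x^n := by
      intro p hp
      rw [Finset.HasAntidiagonal.mem_antidiagonal] at hp
      rw [← hp, pow_add]
      ring
    rw [Finset.sum_congr rfl h1, ← Finset.sum_mul, coeffId n]
    ring
  have hSQ : SS x * (∑' k, (cc k * k) * x^k) = ∑' n, (((cc n * n) * x^n) - (cc n * x^n)) := by
    rw [SS, hcauchy]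
    exact tsum_congr hterm
  rw [hSQ, Summable.tsum_sub (summable_Q hx) (summable_S hx), SS]
  ring

noncomputable def RR : ℝ → ℝ := fun x => ∑' k, cc (k+1) * x^k

lemma S_eq_R {x : ℝ} (hx : |x| < (Real.exp 1)⁻¹) : SS x = RR x * x := by
  rw [SS, Summable.tsum_eq_zero_add (summable_S hx), cc_zero, zero_mul, zero_add, RR, ← tsum_mul_right]
  apply tsum_congr
  intro k
  rw [pow_succ]
  ring

lemma R_cont : ContinuousAt RR 0 := by
  set r : ℝ := (Real.exp 1)⁻¹ / 2 with hr
  have her : Real.exp 1 * r < 1 := by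
    rw [hr, ← mul_div_assoc, mul_inv_cancel₀ (Real.exp_pos 1).ne']
    norm_num
  have hr0 : 0 < r := by positivity
  have hcont : ContinuousOn RR (Set.Icc (-r) r) := by
    apply continuousOn_tsum (u := fun k : ℕ => Real.exp 1 * (Real.exp 1 * r)^k)
    · intro i
      exact (continuous_const.mul (continuous_pow i)).continuousOn
    · exact Summable.mul_left _ (summable_geometric_of_lt_one (by positivity) her)
    · intro k y hy
      rcases Set.mem_Icc.mp hy with ⟨h1, h2⟩
      have hyr : |y| ≤ r := abs_le.mpr ⟨h1, h2⟩
      rw [norm_mul, norm_pow, Real.norm_eq_abs, Real.norm_eq_abs, abs_of_nonneg (cc_nonneg _)]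
      calc cc (k+1) * |y|^k ≤ Real.exp 1^(k+1) * r^k := by
            apply mul_le_mul (cc_le (k+1)) (pow_le_pow_left₀ (abs_nonneg y) hyr k)
              (by positivity) (by positivity)
        _ = Real.exp 1 * (Real.exp 1 * r)^k := by rw [pow_succ, mul_pow]; ring
  apply hcont.continuousAt (Icc_mem_nhds (by linarith) hr0)

lemma R_zero : RR 0 = 1 := by
  rw [RR]
  rw [tsum_eq_single 0]
  · simp [cc_one]
  · intro k hk
    rw [zero_pow hk, mul_zero]

lemma S_zero : SS 0 = 0 := by
  rw [SS, tsum_eq_single 0]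
  · simp [cc_zero]
  · intro k hk
    rw [zero_pow hk, mul_zero]

lemma S_nonneg {x : ℝ} (hx0 : 0 ≤ x) (hx : |x| < (Real.exp 1)⁻¹) : 0 ≤ SS x :=
  tsum_nonneg (fun k => mul_nonneg (cc_nonneg k) (pow_nonneg hx0 k))

-- main : S x * exp (-S x) = x on (0, e⁻¹)
lemma Sexp {x : ℝ} (hx : x ∈ Set.Ioo 0 (Real.exp 1)⁻¹) : SS x * Real.exp (-SS x) = x := by
  set L : ℝ → ℝ := fun z => SS z * Real.exp (-SS z) * z⁻¹ with hL
  have habs : ∀ z : ℝ, z ∈ Set.Ioo 0 (Real.exp 1)⁻¹ → |z| < (Real.exp 1)⁻¹ := by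
    intro z hz
    rw [abs_of_pos hz.1]
    exact hz.2
  have hLderiv : ∀ z ∈ Set.Ioo 0 (Real.exp 1)⁻¹, HasDerivAt L 0 z := by
    intro z hz
    have hz0 : z ≠ 0 := hz.1.ne'
    have hS := hasDerivAt_S (habs z hz)
    have hE : HasDerivAt (fun w => Real.exp (-SS w)) (Real.exp (-SS z) * (-PP z)) z :=
      (hS.neg).exp
    have hI : HasDerivAt (fun w : ℝ => w⁻¹) (-(z^2)⁻¹) z := hasDerivAt_inv hz0
    have hM := (hS.mul hE).mul hI
    have hval : (PP z * Real.exp (-SS z) + SS z * (Real.exp (-SS z) * -PP z)) * z⁻¹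
        + SS z * Real.exp (-SS z) * -(z^2)⁻¹ = 0 := by
      have hode := ode (habs z hz)
      field_simp
      linear_combination (Real.exp (-SS z)) * hode
    simp only [Pi.mul_apply] at hM
    rw [hval] at hM
    exact hM
  -- L is locally constant on the interval
  have hconst : ∀ z1 ∈ Set.Ioo 0 (Real.exp 1)⁻¹, ∀ z2 ∈ Set.Ioo 0 (Real.exp 1)⁻¹,
      z1 ≤ z2 → L z2 = L z1 := by
    intro z1 hz1 z2 hz2 h12
    have hsub : Set.Icc z1 z2 ⊆ Set.Ioo 0 (Real.exp 1)⁻¹ := by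
      intro w hw
      exact ⟨lt_of_lt_of_le hz1.1 hw.1, lt_of_le_of_lt hw.2 hz2.2⟩
    have hcont : ContinuousOn L (Set.Icc z1 z2) := by
      intro w hw
      exact ((hLderiv w (hsub hw)).continuousAt).continuousWithinAt
    have hd : ∀ w ∈ Set.Ico z1 z2, HasDerivWithinAt L 0 (Set.Ici w) w := by
      intro w hw
      exact (hLderiv w (hsub ⟨hw.1, hw.2.le⟩)).hasDerivWithinAt
    exact constant_of_has_deriv_right_zero hcont hd z2 (Set.mem_Icc.mpr ⟨h12, le_refl _⟩)
  -- limit of L at 0+ is 1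
  have hLtend : Filter.Tendsto L (nhdsWithin 0 (Set.Ioi 0)) (nhds 1) := by
    have hFcont : Filter.Tendsto (fun z => RR z * Real.exp (-(RR z * z)))
        (nhdsWithin 0 (Set.Ioi 0)) (nhds 1) := by
      have h1 : ContinuousAt (fun z => RR z * Real.exp (-(RR z * z))) 0 := by
        have := R_cont
        fun_prop
      have h2 : Filter.Tendsto (fun z => RR z * Real.exp (-(RR z * z)))
          (nhdsWithin 0 (Set.Ioi 0)) (nhds (RR 0 * Real.exp (-(RR 0 * 0)))) :=
        h1.continuousWithinAt (s := Set.Ioi (0:ℝ))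
      simpa [R_zero] using h2
    apply Filter.Tendsto.congr' _ hFcont
    filter_upwards [Ioo_mem_nhdsGT_of_mem (Set.left_mem_Ico.mpr (inv_pos.mpr (Real.exp_pos 1)))] with z hz
    rw [hL]
    simp only
    rw [S_eq_R (habs z hz)]
    have hz0 : z ≠ 0 := hz.1.ne'
    field_simp
  -- L is eventually the constant L x
  have hx' := hx
  have hLx : Filter.Tendsto L (nhdsWithin 0 (Set.Ioi 0)) (nhds (L x)) := by
    apply Filter.Tendsto.congr' _ tendsto_const_nhds
    filter_upwards [Ioo_mem_nhdsGT_of_mem (Set.left_mem_Ico.mpr (inv_pos.mpr (Real.exp_pos 1)))] with z hz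
    rcases le_total z x with h | h
    · exact hconst z hz x hx h
    · exact (hconst x hx z hz h).symm
  have := tendsto_nhds_unique hLx hLtend
  rw [hL] at this
  simp only at this
  have hx0 : x ≠ 0 := hx.1.ne'
  field_simp at this
  exact this

lemma S_contOn {b : ℝ} (hb : b < (Real.exp 1)⁻¹) (hb0 : 0 ≤ b) :
    ContinuousOn SS (Set.Icc 0 b) := by
  set r : ℝ := (b + (Real.exp 1)⁻¹)/2 with hr
  have hbr : b < r := by rw [hr]; linarith
  have hre : r < (Real.exp 1)⁻¹ := by rw [hr]; linarith
  have hr0 : 0 < r := by rw [hr]; have := inv_pos.mpr (Real.exp_pos 1); linarith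
  have her : Real.exp 1 * r < 1 := by
    have := mul_lt_mul_of_pos_left hre (Real.exp_pos 1)
    rwa [mul_inv_cancel₀ (Real.exp_pos 1).ne'] at this
  have hcont : ContinuousOn SS (Set.Icc (-r) r) := by
    apply continuousOn_tsum (u := fun k : ℕ => (Real.exp 1 * r)^k)
    · intro i
      exact (continuous_const.mul (continuous_pow i)).continuousOn
    · exact summable_geometric_of_lt_one (by positivity) her
    · intro k y hy
      rcases Set.mem_Icc.mp hy with ⟨h1, h2⟩
      have hyr : |y| ≤ r := abs_le.mpr ⟨h1, h2⟩
      rw [norm_mul, norm_pow, Real.norm_eq_abs, Real.norm_eq_abs, abs_of_nonneg (cc_nonneg _),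
        mul_pow]
      exact mul_le_mul (cc_le k) (pow_le_pow_left₀ (abs_nonneg y) hyr k)
        (by positivity) (by positivity)
  exact hcont.mono (fun y hy => Set.mem_Icc.mpr ⟨by linarith [hy.1], by linarith [hy.2]⟩)

lemma S_lt_one {x : ℝ} (hx : x ∈ Set.Ioo 0 (Real.exp 1)⁻¹) : SS x < 1 := by
  by_contra hcon
  push_neg at hcon
  have hcont : ContinuousOn SS (Set.Icc 0 x) := S_contOn hx.2 hx.1.le
  have hiv := intermediate_value_Icc hx.1.le hcont
  have h1mem : (1:ℝ) ∈ Set.Icc (SS 0) (SS x) := by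
    rw [S_zero]; exact ⟨zero_le_one, hcon⟩
  obtain ⟨x', hx'mem, hx'⟩ := hiv h1mem
  have hx'0 : x' ≠ 0 := by
    intro h
    rw [h, S_zero] at hx'
    norm_num at hx'
  have hx'Ioo : x' ∈ Set.Ioo 0 (Real.exp 1)⁻¹ :=
    ⟨lt_of_le_of_ne hx'mem.1 (Ne.symm hx'0), lt_of_le_of_lt hx'mem.2 hx.2⟩
  have heq := Sexp hx'Ioo
  rw [hx', one_mul, Real.exp_neg] at heq
  exact (ne_of_lt hx'Ioo.2) heq.symm

lemma exp_mono : StrictMonoOn (fun u : ℝ => u * Real.exp (-u)) (Set.Icc 0 1) := by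
  apply strictMonoOn_of_deriv_pos (convex_Icc 0 1)
  · fun_prop
  · intro u hu
    rw [interior_Icc] at hu
    have hd : HasDerivAt (fun u : ℝ => u * Real.exp (-u))
        (1 * Real.exp (-u) + u * (Real.exp (-u) * (-1))) u := by
      exact (hasDerivAt_id u).mul ((hasDerivAt_id u).neg.exp)
    rw [hd.deriv]
    have h1 := Real.exp_pos (-u)
    nlinarith [hu.1, hu.2]

theorem stmt_3 (t : ℝ) (h0 : 0 < t) (h1 : t < 1) :
    ∑' k : ℕ, (k : ℝ) * ((k : ℝ) ^ (k - 2) / (Nat.factorial k) * t ^ (k - 1)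
      * Real.exp (-(k : ℝ) * t)) = 1 := by
  set x : ℝ := t * Real.exp (-t) with hxdef
  have hxpos : 0 < x := mul_pos h0 (Real.exp_pos _)
  have hxlt : x < (Real.exp 1)⁻¹ := by
    have hlog : Real.log t < t - 1 := Real.log_lt_sub_one_of_pos h0 (ne_of_lt h1)
    have : x = Real.exp (Real.log t - t) := by
      rw [Real.exp_sub, Real.exp_log h0, hxdef, Real.exp_neg, div_eq_mul_inv]
    rw [this, ← Real.exp_neg (1:ℝ)]
    apply Real.exp_lt_exp.mpr
    linarith
  have hxIoo : x ∈ Set.Ioo 0 (Real.exp 1)⁻¹ := ⟨hxpos, hxlt⟩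
  have hxabs : |x| < (Real.exp 1)⁻¹ := by rwa [abs_of_pos hxpos]
  have hs := Sexp hxIoo
  have hsmem : SS x ∈ Set.Icc (0:ℝ) 1 := ⟨S_nonneg hxpos.le hxabs, (S_lt_one hxIoo).le⟩
  have htmem : t ∈ Set.Icc (0:ℝ) 1 := ⟨h0.le, h1.le⟩
  have hst : SS x = t := by
    apply exp_mono.injOn hsmem htmem
    simp only
    rw [hs]
  have hterm : ∀ k : ℕ, (k : ℝ) * ((k : ℝ) ^ (k - 2) / (Nat.factorial k) * t ^ (k - 1)
      * Real.exp (-(k : ℝ) * t)) = cc k * x^k * t⁻¹ := by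
    intro k
    rcases Nat.eq_zero_or_pos k with hk | hk
    · subst hk
      simp [cc_zero]
    · rw [cc_def k hk.ne']
      have hxk : x^k = t^k * Real.exp (-(k:ℝ)*t) := by
        rw [hxdef, mul_pow, ← Real.exp_nat_mul]
        congr 2
        push_cast
        ring
      have htk : t^k * t⁻¹ = t^(k-1) := by
        have hk1 : t^k = t^(k-1) * t := by
          rw [← pow_succ]
          congr 1
          omega
        rw [hk1, mul_assoc, mul_inv_cancel₀ h0.ne', mul_one]
      have hkk : (k:ℝ) * (k:ℝ)^(k-2) = (k:ℝ)^(k-1) := by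
        rcases eq_or_lt_of_le (Nat.one_le_iff_ne_zero.mpr hk.ne') with h | h
        · rw [← h]; norm_num
        · rw [← pow_succ']
          congr 1
          omega
      rw [hxk]
      calc (k : ℝ) * ((k : ℝ) ^ (k - 2) / (Nat.factorial k) * t ^ (k - 1) * Real.exp (-(k : ℝ) * t))
          = ((k:ℝ) * (k:ℝ)^(k-2)) / (Nat.factorial k) * t^(k-1) * Real.exp (-(k:ℝ)*t) := by ring
        _ = (k:ℝ)^(k-1) / (Nat.factorial k) * t^(k-1) * Real.exp (-(k:ℝ)*t) := by rw [hkk]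
        _ = (k:ℝ)^(k-1) / (Nat.factorial k) * (t^k * t⁻¹) * Real.exp (-(k:ℝ)*t) := by rw [htk]
        _ = (k:ℝ)^(k-1) / (Nat.factorial k) * (t^k * Real.exp (-(k:ℝ)*t)) * t⁻¹ := by ring
  rw [tsum_congr hterm, tsum_mul_right]
  have : (∑' k, cc k * x^k) = SS x := rfl
  rw [this, hst, mul_inv_cancel₀ h0.ne']
end

section
/- For t in (0,1), the second moment Σ_{k≥1} k²·(k^{k-2}/k!)·t^{k-1}·e^{-kt} equals 1/(1−t). -/
open Real Finset
open scoped fwdDiff Nat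

set_option maxRecDepth 8000
set_option maxHeartbeats 1000000


lemma fd_step (j : ℕ) : Δ_[1] (fun n : ℕ => (n : ℝ) ^ j)
    = ∑ i ∈ range j, (j.choose i : ℝ) • (fun n : ℕ => (n : ℝ) ^ i) := by
  ext n
  have h := add_pow (n : ℝ) 1 j
  simp only [one_pow, mul_one] at h
  simp only [fwdDiff, Finset.sum_apply, Pi.smul_apply, smul_eq_mul]
  push_cast
  rw [h, Finset.sum_range_succ]
  simp [mul_comm]

lemma fd_pow (m : ℕ) :
    (∀ j < m, (fwdDiff (1:ℕ))^[m] (fun n : ℕ => (n : ℝ) ^ j) = 0) ∧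
      ((fwdDiff (1:ℕ))^[m] (fun n : ℕ => (n : ℝ) ^ m) = fun _ => (m ! : ℝ)) := by
  induction m with
  | zero =>
    refine ⟨fun j hj => absurd hj (Nat.not_lt_zero j), ?_⟩
    ext n; simp
  | succ m ih =>
    have key : ∀ j, (fwdDiff (1:ℕ))^[m+1] (fun n : ℕ => (n:ℝ)^j)
        = ∑ i ∈ range j, (j.choose i : ℝ) • (fwdDiff (1:ℕ))^[m] (fun n : ℕ => (n:ℝ)^i) := by
      intro j
      rw [Function.iterate_succ_apply, fd_step, fwdDiff_iter_finset_sum]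
      simp only [fwdDiff_iter_const_smul]
    constructor
    · intro j hj
      rw [key j]
      apply Finset.sum_eq_zero
      intro i hi
      rw [ih.1 i (by simp at hi; omega)]
      simp
    · rw [key (m+1), Finset.sum_range_succ, ih.2]
      rw [Finset.sum_eq_zero (fun i hi => by rw [ih.1 i (by simpa using hi)]; simp), zero_add]
      ext n
      simp [Nat.choose_succ_self_right, Nat.factorial_succ]

lemma alt_sum (m : ℕ) :
    ∑ k ∈ range (m+1), ((-1 : ℝ)^(m-k) * (m.choose k)) * (k:ℝ)^m = (m ! : ℝ) := by
  have h := fwdDiff_iter_eq_sum_shift (1 : ℕ) (fun n : ℕ => (n:ℝ)^m) m 0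
  rw [(fd_pow m).2] at h
  simp only [zero_add, smul_eq_mul, zsmul_eq_mul, smul_eq_mul, Int.cast_mul, Int.cast_pow,
    Int.cast_neg, Int.cast_one, Int.cast_natCast] at h
  rw [h]
  simp


lemma coeff_one (n : ℕ) :
    ∑ k ∈ range (n+1), (-1:ℝ)^(n-k) * (k+1:ℝ)^(n+1) / (((k+1)! : ℝ) * ((n-k)! : ℝ)) = 1 := by
  have h := alt_sum (n+1)
  rw [Finset.sum_range_succ'] at h
  simp only [Nat.succ_sub_succ, Nat.cast_zero, zero_pow (Nat.succ_ne_zero n), mul_zero,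
    add_zero, Nat.cast_add, Nat.cast_one] at h
  have hfac : ((n+1)! : ℝ) ≠ 0 := Nat.cast_ne_zero.mpr (Nat.factorial_ne_zero _)
  have step : ∀ k ∈ range (n+1), (-1:ℝ)^(n-k) * (k+1:ℝ)^(n+1) / (((k+1)! : ℝ) * ((n-k)! : ℝ))
      = ((-1:ℝ)^(n-k) * ((n+1).choose (k+1) : ℝ) * ((k:ℝ)+1)^(n+1)) / ((n+1)! : ℝ) := by
    intro k hk
    have hk' : k + 1 ≤ n + 1 := by simp at hk; omega
    have hc : ((n+1).choose (k+1) * (k+1)! * (n-k)! : ℕ) = (n+1)! := by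
      have := Nat.choose_mul_factorial_mul_factorial hk'
      simpa [Nat.succ_sub_succ] using this
    have hc' : (((n+1).choose (k+1) : ℝ)) * ((k+1)! : ℝ) * ((n-k)! : ℝ) = ((n+1)! : ℝ) := by
      exact_mod_cast congrArg (Nat.cast : ℕ → ℝ) hc
    have h1 : (((k+1)! : ℝ)) ≠ 0 := Nat.cast_ne_zero.mpr (Nat.factorial_ne_zero _)
    have h2 : (((n-k)! : ℝ)) ≠ 0 := Nat.cast_ne_zero.mpr (Nat.factorial_ne_zero _)
    rw [div_eq_div_iff (by positivity) (by positivity)]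
    rw [← hc']
    ring
  rw [Finset.sum_congr rfl step, ← Finset.sum_div, h, div_self hfac]


noncomputable def Aa (t : ℝ) (p : ℕ × ℕ) : ℝ :=
  ((p.1+1:ℝ))^(p.1+1) / ((p.1+1)! : ℝ) * t^p.1 * (-((p.1+1:ℝ)) * t)^p.2 / (p.2 ! : ℝ)

lemma anti_term (t : ℝ) (n k : ℕ) (hk : k ≤ n) :
    Aa t (k, n-k)
      = ((-1:ℝ)^(n-k) * (k+1:ℝ)^(n+1) / (((k+1)! : ℝ) * ((n-k)! : ℝ))) * t^n := by
  obtain ⟨a, rfl⟩ : ∃ a, n = k + a := ⟨n - k, by omega⟩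
  simp only [Aa, Nat.add_sub_cancel_left]
  rw [neg_mul, neg_pow, mul_pow]
  rw [show k + a + 1 = (k+1) + a from by omega, pow_add, pow_add]
  field_simp
  ring

lemma anti (t : ℝ) (n : ℕ) : ∑ p ∈ Finset.HasAntidiagonal.antidiagonal n, Aa t p = t ^ n := by
  rw [Finset.Nat.sum_antidiagonal_eq_sum_range_succ_mk]
  rw [Finset.sum_congr rfl (fun k hk => anti_term t n k (by simpa using Nat.lt_succ_iff.mp (mem_range.mp hk)))]
  rw [← Finset.sum_mul, coeff_one n, one_mul]



noncomputable def w (m : ℕ) (t : ℝ) : ℝ :=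
  ((m+1:ℝ))^(m+1) / ((m+1)! : ℝ) * t^m * Real.exp (-((m+1:ℝ)) * t)

lemma aux_exp (x : ℝ) (k : ℕ) (hx : 0 ≤ x) : x^k / (k ! : ℝ) ≤ Real.exp x := by
  rw [Real.exp_eq_exp_ℝ, NormedSpace.exp_eq_tsum_div]
  exact Summable.le_tsum (Real.summable_pow_div_factorial x) k (fun i _ => by positivity)

lemma cm_le (m : ℕ) : ((m+1:ℝ))^(m+1) / (((m+1)!) : ℝ) ≤ Real.exp ((m:ℝ)+1) := by
  have := aux_exp ((m:ℝ)+1) (m+1) (by positivity)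
  push_cast at this ⊢
  exact this

lemma abs_Aa (t : ℝ) (h0 : 0 < t) (m j : ℕ) :
    |Aa t (m, j)| = ((m+1:ℝ))^(m+1) / ((m+1)! : ℝ) * t^m * (((m+1:ℝ) * t)^j / (j ! : ℝ)) := by
  have h1 : Aa t (m, j) = (((m+1:ℝ))^(m+1) / ((m+1)! : ℝ) * t^m * (((m+1:ℝ) * t)^j / (j ! : ℝ)))
      * (-1 : ℝ)^j := by
    have hn : (-((m:ℝ)+1) * t)^j = (-1:ℝ)^j * (((m:ℝ)+1)*t)^j := by
      rw [neg_mul, neg_pow, mul_pow]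
    simp only [Aa]
    rw [hn]
    ring
  rw [h1, abs_mul]
  have : |(-1:ℝ)^j| = 1 := by
    rw [abs_pow]; simp
  rw [this, mul_one, abs_of_nonneg (by positivity)]

lemma absA_summable (t : ℝ) (h0 : 0 < t) (h8 : t ≤ 1/8) :
    Summable (fun p : ℕ × ℕ => |Aa t p|) := by
  rw [summable_prod_of_nonneg (fun p => abs_nonneg _)]
  constructor
  · intro m
    simp only [abs_Aa t h0]
    exact (Real.summable_pow_div_factorial _).mul_left _
  · have hinner : ∀ m : ℕ, ∑' j, |Aa t (m, j)|
        = ((m+1:ℝ))^(m+1) / ((m+1)! : ℝ) * t^m * Real.exp ((m+1:ℝ) * t) := by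
      intro m
      simp only [abs_Aa t h0]
      rw [tsum_mul_left, Real.exp_eq_exp_ℝ, NormedSpace.exp_eq_tsum_div]
    simp only [hinner]
    apply Summable.of_nonneg_of_le (fun m => by positivity)
      (f := fun m => Real.exp (9/8) * (Real.exp (9/8) / 8)^m)
    · intro m
      have hb1 : ((m+1:ℝ))^(m+1) / ((m+1)! : ℝ) ≤ Real.exp ((m:ℝ)+1) := cm_le m
      have hb2 : t^m ≤ (1/8:ℝ)^m := pow_le_pow_left₀ h0.le h8 m
      have hb3 : Real.exp ((m+1:ℝ) * t) ≤ Real.exp (((m:ℝ)+1) * (1/8)) := by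
        apply Real.exp_le_exp.mpr
        apply mul_le_mul_of_nonneg_left h8 (by positivity)
      calc ((m+1:ℝ))^(m+1) / ((m+1)! : ℝ) * t^m * Real.exp ((m+1:ℝ) * t)
          ≤ Real.exp ((m:ℝ)+1) * (1/8:ℝ)^m * Real.exp (((m:ℝ)+1) * (1/8)) := by
            apply mul_le_mul (mul_le_mul hb1 hb2 (by positivity) (Real.exp_nonneg _)) hb3
              (Real.exp_nonneg _) (by positivity)
        _ = Real.exp (9/8) * (Real.exp (9/8) / 8)^m := by
            rw [mul_right_comm, ← Real.exp_add]
            have h9 : (m:ℝ) + 1 + ((m:ℝ)+1) * (1/8) = ((m+1 : ℕ) : ℝ) * (9/8 : ℝ) := by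
              push_cast; ring
            rw [h9, Real.exp_nat_mul, pow_succ, div_pow]
            rw [div_pow, one_pow]; ring
    · apply Summable.mul_left
      apply summable_geometric_of_lt_one (by positivity)
      have h := Real.exp_one_lt_d9
      have h2 : Real.exp (9/8) ≤ Real.exp 2 := Real.exp_le_exp.mpr (by norm_num)
      have : Real.exp 2 = Real.exp 1 * Real.exp 1 := by rw [← Real.exp_add]; norm_num
      nlinarith [Real.exp_pos 1]

lemma exp_tsum (x : ℝ) : ∑' j : ℕ, x^j / (j ! : ℝ) = Real.exp x := by
  rw [Real.exp_eq_exp_ℝ, NormedSpace.exp_eq_tsum_div]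

lemma small (t : ℝ) (h0 : 0 < t) (h8 : t ≤ 1/8) : ∑' m, w m t = (1-t)⁻¹ := by
  have habs := absA_summable t h0 h8
  have hA : Summable (Aa t) := summable_abs_iff.mp habs
  have h1 : ∑' p : ℕ × ℕ, Aa t p = ∑' m, ∑' j, Aa t (m, j) := Summable.tsum_prod hA
  have hw : ∀ m, ∑' j, Aa t (m, j) = w m t := by
    intro m
    have hterm : ∀ j, Aa t (m,j)
        = (((m:ℝ)+1)^(m+1) / ((m+1)! : ℝ) * t^m) * ((-((m:ℝ)+1) * t)^j / (j ! : ℝ)) := by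
      intro j; simp only [Aa]; ring
    rw [tsum_congr hterm, tsum_mul_left, exp_tsum]
    simp only [w, neg_mul]
  have h2 : ∑' p : ℕ × ℕ, Aa t p = ∑' n : ℕ, (t:ℝ)^n := by
    rw [← Finset.HasAntidiagonal.sigmaAntidiagonalEquivProd.tsum_eq (Aa t)]
    rw [show (fun c : (n : ℕ) × {x // x ∈ Finset.HasAntidiagonal.antidiagonal n} =>
        Aa t (Finset.HasAntidiagonal.sigmaAntidiagonalEquivProd c))
      = (Aa t ∘ Finset.HasAntidiagonal.sigmaAntidiagonalEquivProd) from rfl]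
    rw [Summable.tsum_sigma ((Finset.HasAntidiagonal.sigmaAntidiagonalEquivProd.summable_iff).mpr hA)]
    apply tsum_congr
    intro n
    have : ∀ p : {x // x ∈ Finset.HasAntidiagonal.antidiagonal n},
        (Aa t ∘ Finset.HasAntidiagonal.sigmaAntidiagonalEquivProd) ⟨n, p⟩ = Aa t p := fun p => rfl
    rw [tsum_congr this, Finset.tsum_subtype (Finset.HasAntidiagonal.antidiagonal n) (Aa t), anti]
  have h3 : ∑' n : ℕ, (t:ℝ)^n = (1-t)⁻¹ :=
    tsum_geometric_of_lt_one h0.le (by linarith)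
  rw [← tsum_congr hw, ← h1, h2, h3]


noncomputable def gg (m : ℕ) (z : ℂ) : ℂ :=
  ((m:ℂ)+1)^(m+1) / ((m+1)! : ℂ) * z^m * Complex.exp (-((m:ℂ)+1) * z)

def UU : Set ℂ := {z | z.re < 1 ∧ ‖z * Complex.exp (-z)‖ < Real.exp (-1)}

lemma UU_open : IsOpen UU := by
  apply IsOpen.inter
  · exact isOpen_lt Complex.continuous_re continuous_const
  · exact isOpen_lt (Continuous.norm (continuous_id.mul (Complex.continuous_exp.comp
      continuous_neg))) continuous_const

lemma norm_z_exp (z : ℂ) : ‖z * Complex.exp (-z)‖ = ‖z‖ * Real.exp (-z.re) := by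
  rw [norm_mul, Complex.norm_exp]
  simp

lemma real_mem_UU {t : ℝ} (h0 : 0 ≤ t) (h1 : t < 1) : (t:ℂ) ∈ UU := by
  constructor
  · simpa using h1
  · rw [norm_z_exp]
    simp only [Complex.norm_real, Complex.ofReal_re, Real.norm_eq_abs, abs_of_nonneg h0]
    rcases eq_or_lt_of_le h0 with h|h
    · simp [← h, Real.exp_pos]
    · have ht : t - 1 ≠ 0 := by intro hc; apply absurd h1; simp [show t = 1 by linarith]
      have := Real.add_one_lt_exp ht
      have h2 : t < Real.exp (t - 1) := by linarith
      calc t * Real.exp (-t) < Real.exp (t-1) * Real.exp (-t) := by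
            apply mul_lt_mul_of_pos_right h2 (Real.exp_pos _)
        _ = Real.exp (-1) := by rw [← Real.exp_add]; ring_nf

lemma smul_mem_UU {z : ℂ} (hz : z ∈ UU) {b : ℝ} (hb0 : 0 ≤ b) (hb1 : b ≤ 1) :
    (b : ℂ) * z ∈ UU := by
  obtain ⟨hre, hnorm⟩ := hz
  have hre' : ((b:ℂ) * z).re = b * z.re := Complex.re_ofReal_mul b z
  constructor
  · rw [hre']
    rcases le_or_gt z.re 0 with h|h
    · nlinarith
    · nlinarith
  · rw [norm_z_exp, hre']
    rw [norm_z_exp] at hnorm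
    have key : b * Real.exp (-(b * z.re)) ≤ Real.exp (-z.re) := by
      have h1 : b ≤ Real.exp ((b-1) * z.re) := by
        have h2 : b - 1 ≤ (b-1) * z.re := by nlinarith
        have h3 := Real.add_one_le_exp (b - 1)
        have := Real.exp_le_exp.mpr h2
        linarith
      calc b * Real.exp (-(b * z.re)) ≤ Real.exp ((b-1) * z.re) * Real.exp (-(b * z.re)) := by
            apply mul_le_mul_of_nonneg_right h1 (Real.exp_nonneg _)
        _ = Real.exp (-z.re) := by rw [← Real.exp_add]; ring_nf
    calc ‖(b:ℂ) * z‖ * Real.exp (-(b * z.re)) = ‖z‖ * (b * Real.exp (-(b * z.re))) := by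
          rw [norm_mul]; simp [abs_of_nonneg hb0]; ring
      _ ≤ ‖z‖ * Real.exp (-z.re) := by
          apply mul_le_mul_of_nonneg_left key (norm_nonneg _)
      _ < Real.exp (-1) := hnorm

lemma UU_preconnected : IsPreconnected UU := by
  have hpath : IsPathConnected UU := by
    refine ⟨0, real_mem_UU le_rfl one_pos, fun {z} hz => ?_⟩
    apply JoinedIn.of_segment_subset
    intro p hp
    rw [segment_eq_image] at hp
    obtain ⟨b, hb, rfl⟩ := hp
    simpa using smul_mem_UU hz hb.1 hb.2
  exact hpath.isConnected.isPreconnected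

lemma norm_gg (m : ℕ) (z : ℂ) :
    ‖gg m z‖ = ((m:ℝ)+1)^(m+1)/(((m+1)!) : ℝ) * ‖z‖^m * Real.exp (-((m:ℝ)+1) * z.re) := by
  have h1 : (-((m:ℂ)+1) * z) = ((-((m:ℝ)+1) : ℝ) : ℂ) * z := by push_cast; ring
  have e1 : ‖(m:ℂ)+1‖ = (m:ℝ)+1 := by
    rw [show (m:ℂ)+1 = ((m+1:ℕ):ℂ) by push_cast; ring, Complex.norm_natCast]
    push_cast; ring
  have e2 : ‖((m+1)! : ℂ)‖ = (((m+1)! : ℕ) : ℝ) := Complex.norm_natCast _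
  rw [gg, norm_mul, norm_mul, norm_div, norm_pow, h1,
    Complex.norm_exp, Complex.re_ofReal_mul, e1, e2, norm_pow]

lemma gg_bound (m : ℕ) (z : ℂ) (r c : ℝ) (hz : ‖z * Complex.exp (-z)‖ ≤ r) (hc : c ≤ z.re) :
    ‖gg m z‖ ≤ Real.exp 1 * Real.exp (-c) * (Real.exp 1 * r)^m := by
  have hr0 : 0 ≤ r := le_trans (norm_nonneg _) hz
  rw [norm_gg]
  have hzr : ‖z‖ * Real.exp (-z.re) ≤ r := by rwa [← norm_z_exp]
  have key : ‖z‖^m * Real.exp (-((m:ℝ)+1) * z.re)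
      = (‖z‖ * Real.exp (-z.re))^m * Real.exp (-z.re) := by
    rw [mul_pow, ← Real.exp_nat_mul, mul_assoc, ← Real.exp_add]
    congr 2
    push_cast; ring
  rw [mul_assoc, key]
  have h2 : (‖z‖ * Real.exp (-z.re))^m * Real.exp (-z.re) ≤ r^m * Real.exp (-c) := by
    apply mul_le_mul (pow_le_pow_left₀ (by positivity) hzr m) (Real.exp_le_exp.mpr (by linarith))
      (Real.exp_nonneg _) (by positivity)
  calc ((m:ℝ)+1)^(m+1)/(((m+1)!) : ℝ) * ((‖z‖ * Real.exp (-z.re))^m * Real.exp (-z.re))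
      ≤ Real.exp ((m:ℝ)+1) * (r^m * Real.exp (-c)) := by
        apply mul_le_mul (cm_le m) h2 (by positivity) (Real.exp_nonneg _)
    _ = Real.exp 1 * Real.exp (-c) * (Real.exp 1 * r)^m := by
        have : Real.exp ((m:ℝ)+1) = Real.exp 1 ^ (m+1) := by
          rw [← Real.exp_nat_mul]; congr 1; push_cast; ring
        rw [this, pow_succ, mul_pow]
        ring

lemma gg_diff (m : ℕ) : DifferentiableOn ℂ (gg m) UU := by
  apply Differentiable.differentiableOn
  apply Differentiable.mul
  · exact (differentiable_const _).mul (differentiable_pow m)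
  · exact ((differentiable_const _).mul differentiable_id).cexp

noncomputable def GG : ℂ → ℂ := fun z => ∑' m, gg m z

lemma GG_locunif : TendstoLocallyUniformlyOn (fun (s : Finset ℕ) z => ∑ m ∈ s, gg m z)
    GG Filter.atTop UU := by
  rw [tendstoLocallyUniformlyOn_iff_forall_isCompact UU_open]
  intro K hKU hK
  rcases K.eq_empty_or_nonempty with rfl|hne
  · exact tendstoUniformlyOn_empty
  · obtain ⟨z1, hz1K, hmax⟩ := hK.exists_isMaxOn hne
      ((continuous_id.mul (Complex.continuous_exp.comp continuous_neg)).norm.continuousOn)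
    obtain ⟨z2, hz2K, hmin⟩ := hK.exists_isMinOn hne Complex.continuous_re.continuousOn
    set r := ‖z1 * Complex.exp (-z1)‖ with hr_def
    set c := z2.re with hc_def
    have hrlt : Real.exp 1 * r < 1 := by
      have h := (hKU hz1K).2
      calc Real.exp 1 * r < Real.exp 1 * Real.exp (-1) :=
            mul_lt_mul_of_pos_left h (Real.exp_pos 1)
        _ = 1 := by rw [← Real.exp_add]; simp
    have hr0 : 0 ≤ r := norm_nonneg _
    apply tendstoUniformlyOn_tsum
      (u := fun m => Real.exp 1 * Real.exp (-c) * (Real.exp 1 * r)^m)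
    · exact (summable_geometric_of_lt_one (by positivity) hrlt).mul_left _
    · exact fun m z hz => gg_bound m z r c (hmax hz) (hmin hz)

lemma GG_analytic : AnalyticOnNhd ℂ GG UU :=
  (GG_locunif.differentiableOn
    (Filter.Eventually.of_forall (fun s => DifferentiableOn.fun_sum fun m _ => gg_diff m))
    UU_open).analyticOnNhd UU_open


lemma w_to_gg (t : ℝ) : (↑(∑' m, w m t) : ℂ) = GG (t : ℂ) := by
  rw [Complex.ofReal_tsum]
  apply tsum_congr
  intro m
  simp only [w, gg, GG]
  push_cast [Complex.ofReal_exp]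
  ring

lemma inv_analytic : AnalyticOnNhd ℂ (fun z => (1 - z)⁻¹) UU := by
  intro z hz
  apply AnalyticAt.inv (analyticAt_const.sub (analyticAt_id))
  simp only [Pi.sub_apply, id_eq]
  rw [sub_ne_zero]
  intro h
  have := hz.1
  rw [← h] at this
  simp at this

lemma GG_eq : Set.EqOn GG (fun z => (1 - z)⁻¹) UU := by
  apply GG_analytic.eqOn_of_preconnected_of_frequently_eq inv_analytic UU_preconnected
    (real_mem_UU le_rfl one_pos)
  have hseq : Filter.Tendsto (fun n : ℕ => ((1 / (n + 9) : ℝ) : ℂ)) Filter.atTop (nhdsWithin 0 {(0:ℂ)}ᶜ) := by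
    apply tendsto_nhdsWithin_of_tendsto_nhds_of_eventually_within
    · have h9 : Filter.Tendsto (fun n : ℕ => ((n:ℝ) + 9)) Filter.atTop Filter.atTop :=
        Filter.tendsto_atTop_add_const_right _ 9 tendsto_natCast_atTop_atTop
      have hinv : Filter.Tendsto (fun n : ℕ => (1 / ((n:ℝ) + 9))) Filter.atTop (nhds 0) := by
        simpa [one_div, Pi.inv_def] using h9.inv_tendsto_atTop
      have := (Complex.continuous_ofReal.tendsto 0).comp hinv
      refine Filter.Tendsto.congr (fun n => ?_) (by simpa using this)
      simp only [Function.comp_apply, one_div]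
    · apply Filter.Eventually.of_forall
      intro n
      simp only [Set.mem_compl_iff, Set.mem_singleton_iff]
      intro h
      have : (1 / ((n:ℝ) + 9)) = 0 := by exact_mod_cast congrArg Complex.re h
      have : (0:ℝ) < 1 / ((n:ℝ)+9) := by positivity
      linarith
  apply hseq.frequently
  apply Filter.Frequently.of_forall
  intro n
  have h0 : (0:ℝ) < 1 / ((n:ℝ) + 9) := by positivity
  have h8 : (1 / ((n:ℝ) + 9)) ≤ 1/8 := by
    rw [div_le_div_iff₀ (by positivity) (by norm_num)]
    linarith [Nat.cast_nonneg (α := ℝ) n]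
  have hsm := small _ h0 h8
  have := w_to_gg (1 / ((n:ℝ) + 9))
  rw [hsm] at this
  rw [← this]
  push_cast
  ring


theorem stmt_4 (t : ℝ) (h0 : 0 < t) (h1 : t < 1) :
    ∑' k : ℕ, (k : ℝ) ^ 2 * ((k : ℝ) ^ (k - 2) / (Nat.factorial k) * t ^ (k - 1)
      * Real.exp (-(k : ℝ) * t)) = 1 / (1 - t) := by
  set u : ℕ → ℝ := fun k => (k : ℝ) ^ 2 * ((k : ℝ) ^ (k - 2) / (Nat.factorial k) * t ^ (k - 1)
      * Real.exp (-(k : ℝ) * t)) with hu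
  have hshift : ∀ m : ℕ, u (m+1) = w m t := by
    intro m
    cases m with
    | zero => simp [hu, w]
    | succ n =>
      have h2 : n + 1 + 1 - 2 = n := by omega
      have h1' : n + 1 + 1 - 1 = n + 1 := by omega
      simp only [hu, w, h2, h1']
      have hp : ((n:ℝ)+1+1) ^ 2 * ((n:ℝ)+1+1) ^ n = ((n:ℝ)+1+1) ^ (n+1+1) := by
        rw [← pow_add]; congr 1; omega
      push_cast
      rw [← hp]
      ring
  have ht : (t:ℂ) ∈ UU := real_mem_UU h0.le h1
  have hw_nonneg : ∀ m, 0 ≤ w m t := by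
    intro m
    simp only [w]
    positivity
  have hw_eq_gg : ∀ m, ((w m t : ℝ) : ℂ) = gg m (t:ℂ) := by
    intro m
    simp only [w, gg]
    push_cast [Complex.ofReal_exp]
    ring
  have hsum_w : Summable (fun m => w m t) := by
    have hrlt : Real.exp 1 * ‖(t:ℂ) * Complex.exp (-(t:ℂ))‖ < 1 := by
      calc Real.exp 1 * ‖(t:ℂ) * Complex.exp (-(t:ℂ))‖
          < Real.exp 1 * Real.exp (-1) := mul_lt_mul_of_pos_left ht.2 (Real.exp_pos 1)
        _ = 1 := by rw [← Real.exp_add]; simp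
    apply Summable.of_nonneg_of_le hw_nonneg
      (f := fun m => Real.exp 1 * Real.exp (-t) *
        (Real.exp 1 * ‖(t:ℂ) * Complex.exp (-(t:ℂ))‖)^m)
    · intro m
      have hb := gg_bound m (t:ℂ) (‖(t:ℂ) * Complex.exp (-(t:ℂ))‖) t le_rfl (by simp)
      calc w m t = ‖gg m (t:ℂ)‖ := by
            rw [← hw_eq_gg m, Complex.norm_real, Real.norm_eq_abs, abs_of_nonneg (hw_nonneg m)]
        _ ≤ _ := hb
    · exact (summable_geometric_of_lt_one (by positivity) hrlt).mul_left _
  have hsum_u : Summable u := by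
    rw [← summable_nat_add_iff 1]
    exact hsum_w.congr (fun m => (hshift m).symm)
  have hu0 : u 0 = 0 := by simp [hu]
  have htsum_w : ∑' m, w m t = (1 - t)⁻¹ := by
    apply Complex.ofReal_injective
    rw [w_to_gg t, GG_eq ht]
    push_cast
    ring
  rw [Summable.tsum_eq_zero_add hsum_u, hu0, zero_add]
  rw [tsum_congr hshift, htsum_w, one_div]
end

section
/- Suppose s : (1,∞) → (0,1) is differentiable and satisfies (1 - t + s(t)·t)·s'(t) = p·s(t)·(1 - s(t)) with s(t) → 0 as t → 1⁺. Then q·∫₁^t s(τ) dτ = s(t)·t + ln(1 - s(t)) for all t > 1, where q = 1 - p. -/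
open Real Set Filter

theorem stmt_13 (p : ℝ) (hp0 : 0 ≤ p) (hp1 : p ≤ 1) (s : ℝ → ℝ)
    (hrange : ∀ t > 1, s t ∈ Set.Ioo (0:ℝ) 1)
    (hdiff : ∀ t > 1, DifferentiableAt ℝ s t)
    (hode : ∀ t > 1, (1 - t + s t * t) * deriv s t = p * s t * (1 - s t))
    (hlim : Filter.Tendsto s (nhdsWithin 1 (Set.Ioi 1)) (nhds 0)) :
    ∀ t > 1, (1 - p) * ∫ τ in (1:ℝ)..t, s τ = s t * t + Real.log (1 - s t) := by
  intro t ht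
  set g : ℝ → ℝ := fun u => s u * u + Real.log (1 - s u) with hg_def
  have hcontOn : ContinuousOn s (Set.Ioi 1) := fun x hx =>
    (hdiff x hx).continuousAt.continuousWithinAt
  -- derivative of g
  have hg : ∀ x ∈ Set.Ioi (1:ℝ), HasDerivAt g ((1 - p) * s x) x := by
    intro x hx
    have hx1 : (1:ℝ) < x := hx
    have hs := hrange x hx1
    have h1s : (1:ℝ) - s x > 0 := by linarith [hs.2]
    have hds : HasDerivAt s (deriv s x) x := (hdiff x hx1).hasDerivAt
    have h1 : HasDerivAt (fun u => s u * u) (deriv s x * x + s x * 1) x :=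
      hds.mul (hasDerivAt_id x)
    have h2 : HasDerivAt (fun u => Real.log (1 - s u))
        ((0 - deriv s x) / (1 - s x)) x := by
      exact HasDerivAt.log ((hasDerivAt_const x (1:ℝ)).sub hds) (by linarith)
    have h3 := h1.add h2
    refine h3.congr_deriv ?_
    have hode' := hode x hx1
    have hne : (1:ℝ) - s x ≠ 0 := ne_of_gt h1s
    field_simp
    nlinarith [hode', h1s]
  -- interval integrability of s on [1, t]
  have hii : IntervalIntegrable s MeasureTheory.volume 1 t := by
    rw [intervalIntegrable_iff_integrableOn_Ioc_of_le ht.le]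
    refine ⟨((hcontOn.mono Set.Ioc_subset_Ioi_self).aestronglyMeasurable
      measurableSet_Ioc), ?_⟩
    apply MeasureTheory.HasFiniteIntegral.restrict_of_bounded (C := 1)
    · exact measure_Ioc_lt_top
    · filter_upwards [MeasureTheory.ae_restrict_mem measurableSet_Ioc] with x hx
      have := hrange x hx.1
      rw [Real.norm_eq_abs, abs_of_pos this.1]
      exact this.2.le
  -- FTC for a in (1, t)
  have key : ∀ a ∈ Set.Ioo (1:ℝ) t,
      (1 - p) * (∫ τ in (1:ℝ)..t, s τ) - (1 - p) * (∫ τ in (1:ℝ)..a, s τ)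
        = g t - g a := by
    intro a ha
    have hsub : Set.uIcc a t ⊆ Set.Ioi (1:ℝ) := by
      rw [Set.uIcc_of_le ha.2.le]
      exact fun x hx => lt_of_lt_of_le ha.1 hx.1
    have hderiv : ∀ x ∈ Set.uIcc a t, HasDerivAt g ((1 - p) * s x) x :=
      fun x hx => hg x (hsub hx)
    have hint : IntervalIntegrable (fun x => (1 - p) * s x) MeasureTheory.volume a t :=
      (((hcontOn.mono hsub).const_smul (1 - p)).intervalIntegrable)
    have hftc := intervalIntegral.integral_eq_sub_of_hasDerivAt hderiv hint
    have hsplit : (∫ τ in (1:ℝ)..a, s τ) + (∫ τ in a..t, s τ)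
        = ∫ τ in (1:ℝ)..t, s τ := by
      apply intervalIntegral.integral_add_adjacent_intervals
      · apply hii.mono_set
        rw [Set.uIcc_of_le ha.1.le, Set.uIcc_of_le ht.le]
        exact Set.Icc_subset_Icc le_rfl ha.2.le
      · apply hii.mono_set
        rw [Set.uIcc_of_le ha.2.le, Set.uIcc_of_le ht.le]
        exact Set.Icc_subset_Icc ha.1.le le_rfl
    rw [intervalIntegral.integral_const_mul] at hftc
    nlinarith [hftc, hsplit]
  -- limits as a → 1⁺
  have hA : Tendsto (fun a => (1 - p) * (∫ τ in (1:ℝ)..t, s τ)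
      - (1 - p) * (∫ τ in (1:ℝ)..a, s τ)) (nhdsWithin 1 (Set.Ioi 1))
      (nhds ((1 - p) * (∫ τ in (1:ℝ)..t, s τ))) := by
    have hzero : Tendsto (fun a => ∫ τ in (1:ℝ)..a, s τ)
        (nhdsWithin 1 (Set.Ioi 1)) (nhds 0) := by
      apply squeeze_zero_norm' (a := fun a => 1 * |a - 1|)
      · filter_upwards [self_mem_nhdsWithin] with a (ha : (1:ℝ) < a)
        apply intervalIntegral.norm_integral_le_of_norm_le_const
        intro x hx
        rw [Set.uIoc_of_le ha.le] at hx
        have := hrange x hx.1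
        rw [Real.norm_eq_abs, abs_of_pos this.1]
        exact this.2.le
      · have : Tendsto (fun a : ℝ => 1 * |a - 1|) (nhds 1) (nhds (1 * |(1:ℝ) - 1|)) := by
          exact (continuous_const.mul ((continuous_id.sub continuous_const).abs)).tendsto 1
        simpa using this.mono_left nhdsWithin_le_nhds
    have := hzero.const_mul (1 - p)
    simpa using (tendsto_const_nhds.sub this)
  have hB : Tendsto (fun a => g t - g a) (nhdsWithin 1 (Set.Ioi 1)) (nhds (g t)) := by
    have hga : Tendsto g (nhdsWithin 1 (Set.Ioi 1)) (nhds 0) := by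
      have h1 : Tendsto (fun a => s a * a) (nhdsWithin 1 (Set.Ioi 1)) (nhds 0) := by
        have := hlim.mul (tendsto_id.mono_left (nhdsWithin_le_nhds (s := Set.Ioi 1)))
        simpa using this
      have h2 : Tendsto (fun a => Real.log (1 - s a)) (nhdsWithin 1 (Set.Ioi 1))
          (nhds 0) := by
        have hin : Tendsto (fun a => 1 - s a) (nhdsWithin 1 (Set.Ioi 1)) (nhds 1) := by
          simpa using (tendsto_const_nhds.sub hlim)
        have hlog : Tendsto Real.log (nhds 1) (nhds (Real.log 1)) :=
          (Real.continuousAt_log (by norm_num)).tendsto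
        simpa [Function.comp_def] using hlog.comp hin
      simpa using h1.add h2
    simpa using (tendsto_const_nhds.sub hga)
  have hEq : (fun a => (1 - p) * (∫ τ in (1:ℝ)..t, s τ)
      - (1 - p) * (∫ τ in (1:ℝ)..a, s τ)) =ᶠ[nhdsWithin 1 (Set.Ioi 1)]
      (fun a => g t - g a) := by
    have hmem : Set.Ioo (1:ℝ) t ∈ nhdsWithin 1 (Set.Ioi 1) := by
      rw [mem_nhdsWithin]
      exact ⟨Set.Iio t, isOpen_Iio, ht, fun x hx => ⟨hx.2, hx.1⟩⟩
    filter_upwards [hmem] with a ha using key a ha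
  exact tendsto_nhds_unique (hA.congr' hEq) hB
end

section
/- Let g : (1,∞) → (0,1) satisfy g = 1 − e^{-gt}, and G(t) = ∫₁^t g(τ)dτ. Then G(t) = −ln(1−g(t)) − Li₂(g(t)), where Li₂(x) = Σ_{n≥1} x^n/n². -/
open Real Set Filter Topology

noncomputable def phi17 (x : ℝ) : ℝ := -Real.log (1 - x) / x
noncomputable def psi17 (x : ℝ) : ℝ := 1 / ((1 - x) * x) + Real.log (1 - x) / x ^ 2
noncomputable def L17 (x : ℝ) : ℝ := ∑' n : ℕ, x ^ (n + 1) / ((n : ℝ) + 1) ^ 2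
noncomputable def F17 (x : ℝ) : ℝ := -Real.log (1 - x) - L17 x

lemma log_lt_neg17 {x : ℝ} (hx : x ∈ Ioo (0:ℝ) 1) : Real.log (1 - x) < -x := by
  have h := Real.log_lt_sub_one_of_pos (by linarith [hx.2] : (0:ℝ) < 1 - x)
    (by intro h; simp at h; linarith [hx.1])
  linarith

lemma phi17_gt_one {x : ℝ} (hx : x ∈ Ioo (0:ℝ) 1) : 1 < phi17 x := by
  have h := log_lt_neg17 hx
  rw [phi17, lt_div_iff₀ hx.1]
  linarith

lemma hasDerivAt_phi17 {x : ℝ} (hx : x ∈ Ioo (0:ℝ) 1) : HasDerivAt phi17 (psi17 x) x := by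
  have hx0 : x ≠ 0 := ne_of_gt hx.1
  have h1x : (1:ℝ) - x ≠ 0 := by linarith [hx.2]
  have h1 : HasDerivAt (fun y : ℝ => 1 - y) (-1) x := (hasDerivAt_id x).const_sub 1
  have h2 : HasDerivAt (fun y : ℝ => Real.log (1 - y)) ((1 - x)⁻¹ * (-1)) x :=
    (Real.hasDerivAt_log h1x).comp x h1
  have h3 : HasDerivAt (fun y : ℝ => y⁻¹) (-(x ^ 2)⁻¹) x := hasDerivAt_inv hx0
  have h4 := (h2.neg).mul h3
  have : phi17 = fun y : ℝ => -Real.log (1 - y) * y⁻¹ := by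
    funext y; rw [phi17, div_eq_mul_inv]
  rw [this]
  refine h4.congr_deriv ?_
  rw [psi17]
  field_simp
  simp only [Pi.neg_apply]; ring

lemma psi17_pos {x : ℝ} (hx : x ∈ Ioo (0:ℝ) 1) : 0 < psi17 x := by
  have hx0 : x ≠ 0 := ne_of_gt hx.1
  have h1x : (0:ℝ) < 1 - x := by linarith [hx.2]
  have key : -Real.log (1 - x) < x / (1 - x) := by
    have h := Real.log_lt_sub_one_of_pos (by positivity : (0:ℝ) < (1-x)⁻¹)
      (by rw [ne_eq, inv_eq_one]; intro h; linarith [hx.1])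
    rw [Real.log_inv] at h
    have : (1 - x)⁻¹ - 1 = x / (1 - x) := by field_simp; ring
    linarith
  have heq : psi17 x = (x / (1 - x) + Real.log (1 - x)) / x ^ 2 := by
    rw [psi17]; field_simp
  rw [heq]
  apply div_pos (by linarith) (by positivity)

lemma x_mul_psi17 {x : ℝ} (hx : x ∈ Ioo (0:ℝ) 1) :
    x * psi17 x = 1 / (1 - x) + Real.log (1 - x) / x := by
  have hx0 : x ≠ 0 := ne_of_gt hx.1
  have h1x : (1:ℝ) - x ≠ 0 := by linarith [hx.2]
  rw [psi17]; field_simp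

lemma continuousOn_psi17 : ContinuousOn psi17 (Ioo (0:ℝ) 1) := by
  intro x hx
  have hx0 : x ≠ 0 := ne_of_gt hx.1
  have h1x : (1:ℝ) - x ≠ 0 := by linarith [hx.2]
  have h1 : ((1:ℝ) - x) * x ≠ 0 := mul_ne_zero h1x hx0
  have c1 : ContinuousAt (fun y : ℝ => 1 / ((1 - y) * y)) x :=
    ContinuousAt.div continuousAt_const (by fun_prop) h1
  have c2 : ContinuousAt (fun y : ℝ => Real.log (1 - y)) x :=
    (Real.continuousAt_log h1x).comp (by fun_prop)
  have c3 : ContinuousAt (fun y : ℝ => y ^ 2) x := by fun_prop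
  exact ((c1.add (c2.div c3 (by positivity))).continuousWithinAt)

lemma phi17_strictMono : StrictMonoOn phi17 (Ioo (0:ℝ) 1) := by
  apply strictMonoOn_of_deriv_pos (convex_Ioo 0 1)
  · exact fun x hx => (hasDerivAt_phi17 hx).continuousAt.continuousWithinAt
  · intro x hx
    rw [interior_Ioo] at hx
    rw [(hasDerivAt_phi17 hx).deriv]
    exact psi17_pos hx

lemma hasDerivAt_L17 {x : ℝ} (hx : |x| < 1) :
    HasDerivAt L17 (∑' n : ℕ, x ^ n / ((n : ℝ) + 1)) x := by
  set r : ℝ := (1 + |x|) / 2 with hr_def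
  have hr1 : r < 1 := by rw [hr_def]; linarith
  have hxr : |x| < r := by rw [hr_def]; linarith [abs_nonneg x]
  have hr0 : 0 ≤ r := le_trans (abs_nonneg x) hxr.le
  have hu : Summable (fun n : ℕ => r ^ n) := summable_geometric_of_lt_one hr0 hr1
  have := hasDerivAt_tsum_of_isPreconnected
    (g := fun (n : ℕ) (y : ℝ) => y ^ (n + 1) / ((n : ℝ) + 1) ^ 2)
    (g' := fun (n : ℕ) (y : ℝ) => y ^ n / ((n : ℝ) + 1))
    hu isOpen_Ioo ((convex_Ioo (-r) r).isPreconnected)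
    (fun n y _ => by
      have h0 : ((n : ℝ) + 1) ≠ 0 := by positivity
      have h := (hasDerivAt_pow (n + 1) y).div_const (((n : ℝ) + 1) ^ 2)
      refine h.congr_deriv ?_
      push_cast
      field_simp)
    (fun n y hy => by
      have hyr : |y| ≤ r := le_of_lt (abs_lt.2 ⟨hy.1, hy.2⟩)
      have h1 : ‖y ^ n / ((n : ℝ) + 1)‖ ≤ |y| ^ n := by
        rw [norm_div, norm_pow, Real.norm_eq_abs, Real.norm_eq_abs]
        have : (1:ℝ) ≤ |(n : ℝ) + 1| := by
          rw [abs_of_nonneg (by positivity)]; linarith [Nat.cast_nonneg (α := ℝ) n]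
        calc |y| ^ n / |(n : ℝ) + 1| ≤ |y| ^ n / 1 := by
              apply div_le_div_of_nonneg_left (by positivity) one_pos this
          _ = |y| ^ n := by rw [div_one]
      exact h1.trans (pow_le_pow_left₀ (abs_nonneg y) hyr n))
    (show (0:ℝ) ∈ Ioo (-r) r by
      constructor <;> [linarith [hxr, abs_nonneg x]; linarith [hxr, abs_nonneg x]])
    (by
      apply Summable.congr (f := fun _ : ℕ => (0:ℝ)) summable_zero
      intro n
      simp)
    (show x ∈ Ioo (-r) r from ⟨(abs_lt.1 hxr).1, (abs_lt.1 hxr).2⟩)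
  exact this

lemma tsum_eq_log17 {x : ℝ} (hx0 : x ≠ 0) (hx : |x| < 1) :
    ∑' n : ℕ, x ^ n / ((n : ℝ) + 1) = -Real.log (1 - x) / x := by
  have h := (hasSum_pow_div_log_of_abs_lt_one hx).mul_right x⁻¹
  have heq : ∀ n : ℕ, x ^ (n + 1) / ((n : ℝ) + 1) * x⁻¹ = x ^ n / ((n : ℝ) + 1) := by
    intro n
    have h0 : ((n : ℝ) + 1) ≠ 0 := by positivity
    rw [pow_succ]
    field_simp
  have h2 : HasSum (fun n : ℕ => x ^ n / ((n : ℝ) + 1)) (-Real.log (1 - x) * x⁻¹) := by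
    simpa only [heq] using h
  rw [h2.tsum_eq, div_eq_mul_inv]

lemma hasDerivAt_F17 {x : ℝ} (hx : x ∈ Ioo (0:ℝ) 1) : HasDerivAt F17 (x * psi17 x) x := by
  have hx0 : x ≠ 0 := ne_of_gt hx.1
  have h1x : (1:ℝ) - x ≠ 0 := by linarith [hx.2]
  have habs : |x| < 1 := abs_lt.2 ⟨by linarith [hx.1], hx.2⟩
  have hA : HasDerivAt (fun y : ℝ => -Real.log (1 - y)) ((1 - x)⁻¹) x := by
    have h1 : HasDerivAt (fun y : ℝ => 1 - y) (-1) x := (hasDerivAt_id x).const_sub 1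
    have h2 := ((Real.hasDerivAt_log h1x).comp x h1).neg
    refine h2.congr_deriv ?_
    ring
  have h := hA.sub (hasDerivAt_L17 habs)
  have hval : (1 - x)⁻¹ - ∑' n : ℕ, x ^ n / ((n : ℝ) + 1) = x * psi17 x := by
    rw [tsum_eq_log17 hx0 habs, x_mul_psi17 hx, one_div]
    ring
  rw [← hval]
  exact h

theorem stmt_17 (g : ℝ → ℝ)
    (hrange : ∀ t > 1, g t ∈ Set.Ioo (0:ℝ) 1)
    (himp : ∀ t > 1, g t = 1 - Real.exp (-(g t) * t)) :
    ∀ t > 1, ∫ τ in (1:ℝ)..t, g τ =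
      -Real.log (1 - g t) - ∑' n : ℕ, (g t) ^ (n + 1) / ((n : ℝ) + 1) ^ 2 := by
  have key1 : ∀ s, 1 < s → phi17 (g s) = s := by
    intro s hs
    have hr := hrange s hs
    have h := himp s hs
    have hexp : Real.exp (-(g s) * s) = 1 - g s := by linarith
    have hlog : Real.log (1 - g s) = -(g s) * s := by rw [← hexp, Real.log_exp]
    rw [phi17, hlog]
    field_simp [ne_of_gt hr.1]
  have key2 : ∀ x ∈ Ioo (0:ℝ) 1, g (phi17 x) = x := by
    intro x hx
    have h1 : 1 < phi17 x := phi17_gt_one hx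
    exact phi17_strictMono.injOn (hrange _ h1) hx (key1 _ h1)
  have key3 : StrictMonoOn g (Ioi (1:ℝ)) := by
    intro s hs u hu hsu
    by_contra hc
    push_neg at hc
    have := phi17_strictMono.monotoneOn (hrange u hu) (hrange s hs) hc
    rw [key1 u hu, key1 s hs] at this
    linarith
  have gimg : g '' (Ioi (1:ℝ)) = Ioo (0:ℝ) 1 := by
    apply Subset.antisymm
    · rintro y ⟨s, hs, rfl⟩; exact hrange s hs
    · rintro x hx; exact ⟨phi17 x, phi17_gt_one hx, key2 x hx⟩
  have key4 : ContinuousOn g (Ioi (1:ℝ)) := by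
    intro a ha
    refine (key3.continuousAt_of_image_mem_nhds (isOpen_Ioi.mem_nhds ha) ?_).continuousWithinAt
    rw [gimg]
    exact isOpen_Ioo.mem_nhds (hrange a ha)
  intro t ht
  have hbt := hrange t ht
  -- FTC for F17
  have hFTC : ∀ a b : ℝ, a ∈ Ioo (0:ℝ) 1 → b ∈ Ioo (0:ℝ) 1 → a ≤ b →
      ∫ h in a..b, h * psi17 h = F17 b - F17 a := by
    intro a b ha hb hab
    have hsub : uIcc a b ⊆ Ioo (0:ℝ) 1 := by
      rw [uIcc_of_le hab]
      exact Icc_subset_Ioo ha.1 hb.2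
    apply intervalIntegral.integral_eq_sub_of_hasDerivAt
    · intro x hx; exact hasDerivAt_F17 (hsub hx)
    · exact (continuousOn_id.mul (continuousOn_psi17.mono hsub)).intervalIntegrable
  -- substitution
  have hsubst : ∀ s, 1 < s → s ≤ t → ∫ τ in s..t, g τ = F17 (g t) - F17 (g s) := by
    intro s hs hst
    have ha := hrange s hs
    have hab : g s ≤ g t := by
      rcases eq_or_lt_of_le hst with rfl | h
      · exact le_refl _
      · exact (key3 hs ht h).le
    have hsubIoo : uIcc (g s) (g t) ⊆ Ioo (0:ℝ) 1 := by
      rw [uIcc_of_le hab]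
      exact Icc_subset_Ioo ha.1 hbt.2
    have himgsub : phi17 '' uIcc (g s) (g t) ⊆ Ioi (1:ℝ) := by
      rintro y ⟨x, hx, rfl⟩
      exact phi17_gt_one (hsubIoo hx)
    have h1 : ∫ x in (g s)..(g t), (g ∘ phi17) x * psi17 x
        = ∫ u in phi17 (g s)..phi17 (g t), g u :=
      intervalIntegral.integral_comp_mul_deriv'
        (fun x hx => hasDerivAt_phi17 (hsubIoo hx))
        (continuousOn_psi17.mono hsubIoo)
        (key4.mono himgsub)
    rw [key1 s hs, key1 t ht] at h1
    have h2 : ∫ x in (g s)..(g t), (g ∘ phi17) x * psi17 x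
        = ∫ x in (g s)..(g t), x * psi17 x := by
      apply intervalIntegral.integral_congr
      intro x hx
      simp only [Function.comp_apply]
      rw [key2 x (hsubIoo hx)]
    rw [← h1, h2, hFTC _ _ ha hbt hab]
  -- integrability of g on [1, t]
  have hInt : IntervalIntegrable g MeasureTheory.volume 1 t := by
    rw [intervalIntegrable_iff_integrableOn_Ioc_of_le ht.le]
    have hmeas : MeasurableSet (Ioc (1:ℝ) t) := measurableSet_Ioc
    have hcont : ContinuousOn g (Ioc 1 t) := key4.mono Ioc_subset_Ioi_self
    apply MeasureTheory.Integrable.mono' (g := fun _ => (1:ℝ))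
      (MeasureTheory.integrableOn_const measure_Ioc_lt_top.ne)
      (hcont.aestronglyMeasurable hmeas)
    rw [MeasureTheory.ae_restrict_iff' hmeas]
    filter_upwards with x hx
    have h := hrange x hx.1
    rw [Real.norm_eq_abs, abs_of_pos h.1]
    exact h.2.le
  -- limits as s → 1⁺
  have hg0 : Tendsto g (𝓝[>] (1:ℝ)) (𝓝 0) := by
    rw [tendsto_order]
    constructor
    · intro b hb
      filter_upwards [self_mem_nhdsWithin] with s hs
      exact lt_trans hb (hrange s hs).1
    · intro b hb
      rcases lt_or_ge b 1 with hb1 | hb1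
      · have hbO : b ∈ Ioo (0:ℝ) 1 := ⟨hb, hb1⟩
        filter_upwards [Ioo_mem_nhdsGT_of_mem ⟨le_refl _, phi17_gt_one hbO⟩] with s hs
        have h := key3 (mem_Ioi.2 hs.1) (mem_Ioi.2 (phi17_gt_one hbO)) hs.2
        rwa [key2 b hbO] at h
      · filter_upwards [self_mem_nhdsWithin] with s hs
        exact lt_of_lt_of_le (hrange s hs).2 hb1
  have hF0 : Tendsto (fun s => F17 (g s)) (𝓝[>] (1:ℝ)) (𝓝 0) := by
    have hcF : ContinuousAt F17 0 := by
      have hA : ContinuousAt (fun y : ℝ => -Real.log (1 - y)) 0 := by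
        have hf : ContinuousAt (fun y : ℝ => (1:ℝ) - y) 0 := by fun_prop
        have h := (Real.continuousAt_log (by norm_num : (1:ℝ) - 0 ≠ 0)).comp hf
        exact h.neg
      have hB : ContinuousAt L17 0 := (hasDerivAt_L17 (by norm_num)).continuousAt
      exact hA.sub hB
    have hFz : F17 0 = 0 := by simp [F17, L17]
    rw [← hFz]
    exact hcF.tendsto.comp hg0
  have hI0 : Tendsto (fun s => ∫ τ in (1:ℝ)..s, g τ) (𝓝[>] (1:ℝ)) (𝓝 0) := by
    apply squeeze_zero_norm' (a := fun s : ℝ => 1 * |s - 1|)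
    · filter_upwards [Ioo_mem_nhdsGT_of_mem ⟨le_refl _, ht⟩] with s hs
      apply intervalIntegral.norm_integral_le_of_norm_le_const
      intro x hx
      rw [uIoc_of_le hs.1.le] at hx
      have h := hrange x hx.1
      rw [Real.norm_eq_abs, abs_of_pos h.1]
      exact h.2.le
    · have h : Tendsto (fun s : ℝ => 1 * |s - 1|) (𝓝 1) (𝓝 (1 * |(1:ℝ) - 1|)) := by
        apply Continuous.tendsto
        fun_prop
      simp only [sub_self, abs_zero, mul_zero] at h
      exact h.mono_left nhdsWithin_le_nhds
  -- combine
  have hev : (fun s => (∫ τ in (1:ℝ)..s, g τ) + (F17 (g t) - F17 (g s)))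
      =ᶠ[nhdsWithin (1:ℝ) (Set.Ioi 1)] (fun _ => ∫ τ in (1:ℝ)..t, g τ) := by
    filter_upwards [Ioo_mem_nhdsGT_of_mem ⟨le_refl _, ht⟩] with s hs
    have hmem1 : (1:ℝ) ∈ uIcc (1:ℝ) t := left_mem_uIcc
    have hmems : s ∈ uIcc (1:ℝ) t := by
      rw [uIcc_of_le ht.le]
      exact ⟨hs.1.le, hs.2.le⟩
    have hmemt : t ∈ uIcc (1:ℝ) t := right_mem_uIcc
    have hsplit : (∫ τ in (1:ℝ)..s, g τ) + ∫ τ in s..t, g τ = ∫ τ in (1:ℝ)..t, g τ :=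
      intervalIntegral.integral_add_adjacent_intervals
        (hInt.mono_set (uIcc_subset_uIcc hmem1 hmems))
        (hInt.mono_set (uIcc_subset_uIcc hmems hmemt))
    rw [← hsubst s hs.1 hs.2.le, hsplit]
  have h1 : Tendsto (fun s => (∫ τ in (1:ℝ)..s, g τ) + (F17 (g t) - F17 (g s)))
      (𝓝[>] (1:ℝ)) (𝓝 (0 + (F17 (g t) - 0))) := hI0.add (tendsto_const_nhds.sub hF0)
  have h2 : Tendsto (fun s => (∫ τ in (1:ℝ)..s, g τ) + (F17 (g t) - F17 (g s)))
      (𝓝[>] (1:ℝ)) (𝓝 (∫ τ in (1:ℝ)..t, g τ)) :=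
    Tendsto.congr' hev.symm tendsto_const_nhds
  have hfinal := tendsto_nhds_unique h2 h1
  rw [hfinal]
  simp [F17, L17]
end
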